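/- Let X and Y be locally compact, connected Hausdorff spaces, ρ a quasi-integral on C_c(X) whose corresponding topological measure μ = c·μ' is almost simple (μ' simple, c > 0), and η a quasi-integral on C_c(Y) with corresponding compact-finite topological measure ν. The functional η × ρ is a quasi-integral; let ν × μ denote its corresponding topological measure on X × Y. Then for every open A ⊆ X × Y, (ν × μ)(A) = c·ν({y ∈ Y : μ(A_y) = c}), where A_y = {x ∈ X : (x,y) ∈ A}. If ν is finite, the same formula holds for every compact A ⊆ X × Y. -/

import Mathlib

open scoped ENNReal CompactlySupported
open CompactlySupportedContinuousMap

namespace QLF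

variable {X Y : Type*}

/-- Membership in the singly generated subalgebra `B(f)`:
`g ∈ B(f)` iff `g = φ ∘ f` for some continuous `φ` with `φ 0 = 0`. -/
def InB [TopologicalSpace X] (f g : C_c(X, ℝ)) : Prop :=
  ∃ φ : C(ℝ, ℝ), φ 0 = 0 ∧ ∀ x, g x = φ (f x)

/-- A quasi-integral (quasi-linear functional) on `C_c(X)`. -/
structure IsQuasiIntegral [TopologicalSpace X] (ρ : C_c(X, ℝ) → ℝ) : Prop where
  smul : ∀ (a : ℝ) (f : C_c(X, ℝ)), ρ (a • f) = a * ρ f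
  add : ∀ f g h : C_c(X, ℝ), InB f g → InB f h → ρ (g + h) = ρ g + ρ h
  pos : ∀ f : C_c(X, ℝ), (∀ x, 0 ≤ f x) → 0 ≤ ρ f

/-- The value of the topological measure corresponding to `ρ` on an open set. -/
noncomputable def qiOpen [TopologicalSpace X] (ρ : C_c(X, ℝ) → ℝ) (U : Set X) : ℝ≥0∞ :=
  ⨆ (f : C_c(X, ℝ)) (_ : (∀ x, 0 ≤ f x ∧ f x ≤ 1) ∧ tsupport f ⊆ U), ENNReal.ofReal (ρ f)

open Classical in
/-- The topological measure corresponding to a quasi-integral `ρ`: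
on open sets given by `qiOpen`, on other (closed) sets by outer regularity. -/
noncomputable def qiMeas [TopologicalSpace X] (ρ : C_c(X, ℝ) → ℝ) (A : Set X) : ℝ≥0∞ :=
  if IsOpen A then qiOpen ρ A
  else ⨅ (U : Set X) (_ : IsOpen U ∧ A ⊆ U), qiOpen ρ U

/-- A topological measure on `X` (as a set function on all sets; only its values on
open and closed sets are constrained/meaningful). -/
def IsTopMeasure [TopologicalSpace X] (μ : Set X → ℝ≥0∞) : Prop :=
  (∀ A B : Set X, Disjoint A B → (IsCompact A ∨ IsOpen A) → (IsCompact B ∨ IsOpen B) →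
      (IsCompact (A ∪ B) ∨ IsOpen (A ∪ B)) → μ (A ∪ B) = μ A + μ B) ∧
  (∀ U : Set X, IsOpen U → μ U = ⨆ (K : Set X) (_ : IsCompact K ∧ K ⊆ U), μ K) ∧
  (∀ F : Set X, IsClosed F → μ F = ⨅ (U : Set X) (_ : IsOpen U ∧ F ⊆ U), μ U)

/-- A simple topological measure: assumes only the values 0 and 1 on open and closed sets. -/
def IsSimpleTM [TopologicalSpace X] (μ : Set X → ℝ≥0∞) : Prop :=
  IsTopMeasure μ ∧ ∀ A : Set X, IsOpen A ∨ IsClosed A → μ A = 0 ∨ μ A = 1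

/-- A simple quasi-integral: its corresponding topological measure assumes only 0 and 1. -/
def IsSimpleQI [TopologicalSpace X] (ρ : C_c(X, ℝ) → ℝ) : Prop :=
  ∀ A : Set X, IsOpen A ∨ IsClosed A → qiMeas ρ A = 0 ∨ qiMeas ρ A = 1

/-- An almost simple quasi-integral: its corresponding topological measure is a positive
scalar multiple of a simple topological measure. -/
def IsAlmostSimpleQI [TopologicalSpace X] (ρ : C_c(X, ℝ) → ℝ) : Prop :=
  ∃ (c : ℝ≥0∞) (μ' : Set X → ℝ≥0∞), 0 < c ∧ c ≠ ∞ ∧ IsSimpleTM μ' ∧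
    ∀ A : Set X, IsOpen A ∨ IsClosed A → qiMeas ρ A = c * μ' A

/-- The composition `φ ∘ f` as an element of `C_c(X, ℝ)`, for continuous `φ` with `φ 0 = 0`. -/
noncomputable def compCc [TopologicalSpace X] (φ : C(ℝ, ℝ)) (hφ : φ 0 = 0)
    (f : C_c(X, ℝ)) : C_c(X, ℝ) :=
  ⟨⟨fun x => φ (f x), φ.continuous.comp f.continuous⟩, f.hasCompactSupport'.comp_left hφ⟩

section Products

variable [TopologicalSpace X] [TopologicalSpace Y]

/-- The section `f_y ∈ C_c(X)` of `f ∈ C_c(X × Y)`, `f_y (x) = f (x, y)`. -/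
noncomputable def fiberY [T2Space X] (f : C_c(X × Y, ℝ)) (y : Y) : C_c(X, ℝ) :=
  ⟨⟨fun x => f (x, y), f.continuous.comp (continuous_id.prodMk continuous_const)⟩,
    HasCompactSupport.intro (f.hasCompactSupport'.image continuous_fst)
      (fun x hx => by
        by_contra h
        exact hx ⟨(x, y), subset_tsupport _ h, rfl⟩)⟩

/-- The section `f_x ∈ C_c(Y)` of `f ∈ C_c(X × Y)`, `f_x (y) = f (x, y)`. -/
noncomputable def fiberX [T2Space Y] (f : C_c(X × Y, ℝ)) (x : X) : C_c(Y, ℝ) :=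
  ⟨⟨fun y => f (x, y), f.continuous.comp (continuous_const.prodMk continuous_id)⟩,
    HasCompactSupport.intro (f.hasCompactSupport'.image continuous_snd)
      (fun y hy => by
        by_contra h
        exact hy ⟨(x, y), subset_tsupport _ h, rfl⟩)⟩

/-- `T_ρ(f) (y) = ρ (f_y)` as a bare function on `Y`. -/
noncomputable def Tmap [T2Space X] (ρ : C_c(X, ℝ) → ℝ) (f : C_c(X × Y, ℝ)) : Y → ℝ :=
  fun y => ρ (fiberY f y)

/-- `S_η(f) (x) = η (f_x)` as a bare function on `X`. -/
noncomputable def Smap [T2Space Y] (η : C_c(Y, ℝ) → ℝ) (f : C_c(X × Y, ℝ)) : X → ℝ :=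
  fun x => η (fiberX f x)

open Classical in
/-- `T_ρ(f)` as an element of `C_c(Y, ℝ)` (when `ρ` is a quasi-integral, `T_ρ(f)` is indeed
continuous with compact support, and this definition takes the first branch). -/
noncomputable def TCc [T2Space X] (ρ : C_c(X, ℝ) → ℝ) (f : C_c(X × Y, ℝ)) : C_c(Y, ℝ) :=
  if h : Continuous (Tmap ρ f) ∧ HasCompactSupport (Tmap ρ f)
  then ⟨⟨Tmap ρ f, h.1⟩, h.2⟩ else 0

open Classical in
/-- `S_η(f)` as an element of `C_c(X, ℝ)`. -/
noncomputable def SCc [T2Space Y] (η : C_c(Y, ℝ) → ℝ) (f : C_c(X × Y, ℝ)) : C_c(X, ℝ) :=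
  if h : Continuous (Smap η f) ∧ HasCompactSupport (Smap η f)
  then ⟨⟨Smap η f, h.1⟩, h.2⟩ else 0

/-- The repeated quasi-integral `(η × ρ) (f) = η (T_ρ (f))`. -/
noncomputable def prodQI [T2Space X] (η : C_c(Y, ℝ) → ℝ) (ρ : C_c(X, ℝ) → ℝ) :
    C_c(X × Y, ℝ) → ℝ := fun f => η (TCc ρ f)

/-- The repeated quasi-integral `(ρ × η) (f) = ρ (S_η (f))`. -/
noncomputable def prodQI' [T2Space Y] (ρ : C_c(X, ℝ) → ℝ) (η : C_c(Y, ℝ) → ℝ) :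
    C_c(X × Y, ℝ) → ℝ := fun f => ρ (SCc η f)

/-- The tensor product `(g ⊗ h) (x, y) = g (x) * h (y)` as an element of `C_c(X × Y, ℝ)`. -/
noncomputable def tensor (g : C_c(X, ℝ)) (h : C_c(Y, ℝ)) : C_c(X × Y, ℝ) :=
  ⟨⟨fun p => g p.1 * h p.2,
      (g.continuous.comp continuous_fst).mul (h.continuous.comp continuous_snd)⟩,
    HasCompactSupport.intro' (g.hasCompactSupport'.prod h.hasCompactSupport')
      ((isClosed_tsupport _).prod (isClosed_tsupport _))
      (fun p hp => by
        rcases not_and_or.mp (by simpa [Set.mem_prod] using hp) with h1 | h1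
        · simp [image_eq_zero_of_notMem_tsupport h1]
        · simp [image_eq_zero_of_notMem_tsupport h1])⟩

end Products

/-- A topological measure is subadditive (equivalently, extends to a Borel measure). -/
def IsSubadditiveOnOpens [TopologicalSpace X] (μ : Set X → ℝ≥0∞) : Prop :=
  ∀ U V : Set X, IsOpen U → IsOpen V → μ (U ∪ V) ≤ μ U + μ V

/-- `μ` is a positive scalar multiple of a point mass `δ_{x₀}` (on open and closed sets). -/
def IsPointMassMultiple [TopologicalSpace X] (μ : Set X → ℝ≥0∞) : Prop :=
  ∃ (c : ℝ≥0∞) (x₀ : X), 0 < c ∧ c ≠ ∞ ∧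
    ∀ A : Set X, IsOpen A ∨ IsClosed A →
      μ A = c * A.indicator (fun _ => (1 : ℝ≥0∞)) x₀


section Aux1

variable {X : Type*} [TopologicalSpace X]

/-! ### Basic lemmas on quasi-integrals -/

theorem compCc_apply (φ : C(ℝ, ℝ)) (hφ : φ 0 = 0) (f : C_c(X, ℝ)) (x : X) :
    compCc φ hφ f x = φ (f x) := rfl

theorem qi_zero {ρ : C_c(X, ℝ) → ℝ} (hρ : IsQuasiIntegral ρ) : ρ 0 = 0 := by
  have h := hρ.smul 0 0
  simpa using h

theorem qi_add_comp {ρ : C_c(X, ℝ) → ℝ} (hρ : IsQuasiIntegral ρ) (f : C_c(X, ℝ))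
    (φ ψ : C(ℝ, ℝ)) (hφ : φ 0 = 0) (hψ : ψ 0 = 0) :
    ρ (compCc φ hφ f + compCc ψ hψ f) = ρ (compCc φ hφ f) + ρ (compCc ψ hψ f) :=
  hρ.add f _ _ ⟨φ, hφ, fun _ => rfl⟩ ⟨ψ, hψ, fun _ => rfl⟩

theorem qi_eq_add_comp {ρ : C_c(X, ℝ) → ℝ} (hρ : IsQuasiIntegral ρ) (f : C_c(X, ℝ))
    (φ ψ : C(ℝ, ℝ)) (hφ : φ 0 = 0) (hψ : ψ 0 = 0) (h : ∀ s : ℝ, φ s + ψ s = s) :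
    ρ f = ρ (compCc φ hφ f) + ρ (compCc ψ hψ f) := by
  have : compCc φ hφ f + compCc ψ hψ f = f := by
    ext x
    simp [compCc_apply, h (f x)]
  conv_lhs => rw [← this]
  exact qi_add_comp hρ f φ ψ hφ hψ

theorem qi_mono_comp {ρ : C_c(X, ℝ) → ℝ} (hρ : IsQuasiIntegral ρ) (f : C_c(X, ℝ))
    (φ ψ : C(ℝ, ℝ)) (hφ : φ 0 = 0) (hψ : ψ 0 = 0) (h : ∀ x, φ (f x) ≤ ψ (f x)) :
    ρ (compCc φ hφ f) ≤ ρ (compCc ψ hψ f) := by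
  have hsub : compCc ψ hψ f = compCc φ hφ f + compCc (ψ - φ) (by simp [hφ, hψ]) f := by
    ext x
    simp [compCc_apply]
  have hpos : 0 ≤ ρ (compCc (ψ - φ) (by simp [hφ, hψ]) f) := by
    apply hρ.pos
    intro x
    simp only [compCc_apply, ContinuousMap.sub_apply]
    linarith [h x]
  rw [hsub, qi_add_comp hρ f φ (ψ - φ) hφ (by simp [hφ, hψ])]
  linarith

theorem cc_bound (f : C_c(X, ℝ)) : ∃ M : ℝ, 0 ≤ M ∧ ∀ x, |f x| ≤ M := by
  obtain ⟨C, hC⟩ := (continuous_abs.comp f.continuous).bounded_above_of_compact_support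
    (f.hasCompactSupport'.comp_left (g := abs) abs_zero)
  refine ⟨max C 0, le_max_right _ _, fun x => ?_⟩
  have h := hC x
  rw [Function.comp_apply, Real.norm_eq_abs, abs_abs] at h
  exact h.trans (le_max_left _ _)

/-! ### Basic lemmas on `qiOpen`/`qiMeas` -/

theorem qiMeas_isOpen (ρ : C_c(X, ℝ) → ℝ) {U : Set X} (hU : IsOpen U) :
    qiMeas ρ U = qiOpen ρ U := by
  unfold qiMeas
  rw [if_pos hU]

theorem qiOpen_mono (ρ : C_c(X, ℝ) → ℝ) {U V : Set X} (h : U ⊆ V) :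
    qiOpen ρ U ≤ qiOpen ρ V :=
  iSup₂_le fun f hf => le_iSup₂ (f := fun (f : C_c(X, ℝ)) (_ : (∀ x, 0 ≤ f x ∧ f x ≤ 1) ∧
    tsupport ⇑f ⊆ V) => ENNReal.ofReal (ρ f)) f ⟨hf.1, hf.2.trans h⟩

theorem qiMeas_eq_iInf (ρ : C_c(X, ℝ) → ℝ) (S : Set X) :
    qiMeas ρ S = ⨅ (U : Set X) (_ : IsOpen U ∧ S ⊆ U), qiOpen ρ U := by
  unfold qiMeas
  split_ifs with h
  · refine le_antisymm (le_iInf₂ fun U hU => qiOpen_mono ρ hU.2) ?_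
    exact iInf₂_le S ⟨h, subset_rfl⟩
  · rfl

theorem qiMeas_mono (ρ : C_c(X, ℝ) → ℝ) {S T : Set X} (h : S ⊆ T) :
    qiMeas ρ S ≤ qiMeas ρ T := by
  rw [qiMeas_eq_iInf, qiMeas_eq_iInf]
  exact le_iInf₂ fun U hU => iInf₂_le U ⟨hU.1, h.trans hU.2⟩

theorem le_qiOpen (ρ : C_c(X, ℝ) → ℝ) {U : Set X} {f : C_c(X, ℝ)}
    (hf : ∀ x, 0 ≤ f x ∧ f x ≤ 1) (hsupp : tsupport ⇑f ⊆ U) :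
    ENNReal.ofReal (ρ f) ≤ qiOpen ρ U :=
  le_iSup₂ (f := fun (f : C_c(X, ℝ)) (_ : (∀ x, 0 ≤ f x ∧ f x ≤ 1) ∧
    tsupport ⇑f ⊆ U) => ENNReal.ofReal (ρ f)) f ⟨hf, hsupp⟩

theorem qi_bound {ρ : C_c(X, ℝ) → ℝ} (hρ : IsQuasiIntegral ρ) {U : Set X} {k : C_c(X, ℝ)}
    {M : ℝ} (hM : 0 < M) (hk0 : ∀ x, 0 ≤ k x) (hkM : ∀ x, k x ≤ M)
    (hsupp : tsupport ⇑k ⊆ U) :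
    ENNReal.ofReal (ρ k) ≤ ENNReal.ofReal M * qiOpen ρ U := by
  have hadm : ∀ x, 0 ≤ (M⁻¹ • k) x ∧ (M⁻¹ • k) x ≤ 1 := by
    intro x
    simp only [CompactlySupportedContinuousMap.smul_apply, smul_eq_mul]
    constructor
    · exact mul_nonneg (inv_nonneg.mpr hM.le) (hk0 x)
    · rw [inv_mul_le_iff₀ hM, mul_one]
      exact hkM x
  have hsupp' : tsupport ⇑(M⁻¹ • k) ⊆ U := by
    refine (closure_mono ?_).trans hsupp
    intro x hx
    simp only [Function.mem_support, CompactlySupportedContinuousMap.smul_apply,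
      smul_eq_mul] at hx ⊢
    intro h0
    exact hx (by rw [h0, mul_zero])
  have h1 : ENNReal.ofReal (ρ (M⁻¹ • k)) ≤ qiOpen ρ U := le_qiOpen ρ hadm hsupp'
  have h2 : ρ k = M * ρ (M⁻¹ • k) := by
    rw [hρ.smul]
    field_simp
  rw [h2, ENNReal.ofReal_mul hM.le]
  exact mul_le_mul_right h1 _

theorem qi_attain {ρ : C_c(X, ℝ) → ℝ} {U : Set X} {r : ℝ}
    (hr : ENNReal.ofReal r < qiOpen ρ U) :
    ∃ g : C_c(X, ℝ), (∀ x, 0 ≤ g x ∧ g x ≤ 1) ∧ tsupport ⇑g ⊆ U ∧ r < ρ g := by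
  obtain ⟨g, hg⟩ := lt_iSup_iff.mp hr
  obtain ⟨hadm, hlt⟩ := lt_iSup_iff.mp hg
  refine ⟨g, hadm.1, hadm.2, ?_⟩
  by_contra h
  push_neg at h
  exact absurd (ENNReal.ofReal_le_ofReal h) (not_le.mpr hlt)

end Aux1

section Aux2
set_option linter.unusedSectionVars false
set_option linter.unnecessarySimpa false

variable {X : Type*} [TopologicalSpace X] [T2Space X] {μ : Set X → ℝ≥0∞}

theorem tm_empty (hμ : IsSimpleTM μ) : μ ∅ = 0 := by
  have h := hμ.1.1 ∅ ∅ (disjoint_bot_left) (Or.inr isOpen_empty) (Or.inr isOpen_empty)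
    (Or.inr (by simpa using isOpen_empty))
  rw [Set.union_empty] at h
  rcases hμ.2 ∅ (Or.inl isOpen_empty) with h0 | h1
  · exact h0
  · rw [h1] at h
    exact absurd h (by norm_num)

theorem tm_mono_co (hμ : IsSimpleTM μ) {K U : Set X} (hK : IsCompact K) (hU : IsOpen U)
    (h : K ⊆ U) : μ K ≤ μ U := by
  rw [hμ.1.2.1 U hU]
  exact le_iSup₂ (f := fun (K : Set X) (_ : IsCompact K ∧ K ⊆ U) => μ K) K ⟨hK, h⟩

theorem tm_mono_oo (hμ : IsSimpleTM μ) {U V : Set X} (hU : IsOpen U) (hV : IsOpen V)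
    (h : U ⊆ V) : μ U ≤ μ V := by
  nth_rewrite 1 [hμ.1.2.1 U hU]
  exact iSup₂_le fun K hK => tm_mono_co hμ hK.1 hV (hK.2.trans h)

theorem tm_mono_fo (hμ : IsSimpleTM μ) {F U : Set X} (hF : IsClosed F) (hU : IsOpen U)
    (h : F ⊆ U) : μ F ≤ μ U := by
  rw [hμ.1.2.2 F hF]
  exact iInf₂_le U ⟨hU, h⟩

theorem tm_mono_cf (hμ : IsSimpleTM μ) {K F : Set X} (hK : IsCompact K) (hF : IsClosed F)
    (h : K ⊆ F) : μ K ≤ μ F := by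
  conv_rhs => rw [hμ.1.2.2 F hF]
  exact le_iInf₂ fun U hU => tm_mono_co hμ hK hU.1 (h.trans hU.2)

theorem tm_mono_of (hμ : IsSimpleTM μ) {U F : Set X} (hU : IsOpen U) (hF : IsClosed F)
    (h : U ⊆ F) : μ U ≤ μ F := by
  nth_rewrite 1 [hμ.1.2.1 U hU]
  exact iSup₂_le fun K hK => tm_mono_cf hμ hK.1 hF (hK.2.trans h)

theorem tm_one_mono (hμ : IsSimpleTM μ) {U V : Set X} (hU : IsOpen U) (hV : IsOpen V)
    (h : U ⊆ V) (h1 : μ U = 1) : μ V = 1 := by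
  rcases hμ.2 V (Or.inl hV) with h0 | hone
  · have := tm_mono_oo hμ hU hV h
    rw [h1, h0] at this
    exact absurd this (by norm_num)
  · exact hone

theorem tm_one_mono_co (hμ : IsSimpleTM μ) {K V : Set X} (hK : IsCompact K) (hV : IsOpen V)
    (h : K ⊆ V) (h1 : μ K = 1) : μ V = 1 := by
  rcases hμ.2 V (Or.inl hV) with h0 | hone
  · have := tm_mono_co hμ hK hV h
    rw [h1, h0] at this
    exact absurd this (by norm_num)
  · exact hone

theorem tm_inner (hμ : IsSimpleTM μ) {U : Set X} (hU : IsOpen U) (h1 : μ U = 1) :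
    ∃ K : Set X, IsCompact K ∧ K ⊆ U ∧ μ K = 1 := by
  have hlt : (0 : ℝ≥0∞) < μ U := by rw [h1]; norm_num
  rw [hμ.1.2.1 U hU] at hlt
  obtain ⟨K, hK⟩ := lt_iSup_iff.mp hlt
  obtain ⟨hKP, hKlt⟩ := lt_iSup_iff.mp hK
  refine ⟨K, hKP.1, hKP.2, ?_⟩
  rcases hμ.2 K (Or.inr hKP.1.isClosed) with h0 | h1'
  · rw [h0] at hKlt; exact absurd hKlt (lt_irrefl _)
  · exact h1'

theorem tm_outer_zero (hμ : IsSimpleTM μ) {F : Set X} (hF : IsClosed F) (h0 : μ F = 0) :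
    ∃ U : Set X, IsOpen U ∧ F ⊆ U ∧ μ U = 0 := by
  have hlt : μ F < 1 := by rw [h0]; norm_num
  rw [hμ.1.2.2 F hF] at hlt
  obtain ⟨U, hU⟩ := iInf_lt_iff.mp hlt
  obtain ⟨hUP, hUlt⟩ := iInf_lt_iff.mp hU
  refine ⟨U, hUP.1, hUP.2, ?_⟩
  rcases hμ.2 U (Or.inl hUP.1) with h0' | h1'
  · exact h0'
  · rw [h1'] at hUlt; exact absurd hUlt (lt_irrefl _)

theorem tm_disj_opens (hμ : IsSimpleTM μ) {U V : Set X} (hU : IsOpen U) (hV : IsOpen V)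
    (hd : Disjoint U V) (h1 : μ U = 1) (h2 : μ V = 1) : False := by
  have h := hμ.1.1 U V hd (Or.inr hU) (Or.inr hV) (Or.inr (hU.union hV))
  rw [h1, h2] at h
  rcases hμ.2 (U ∪ V) (Or.inl (hU.union hV)) with h0 | hone
  · rw [h0] at h; exact absurd h (by norm_num)
  · rw [hone] at h; exact absurd h (by norm_num)

theorem tm_split_compl (hμ : IsSimpleTM μ) {C : Set X} (hC : IsCompact C) :
    μ Set.univ = μ C + μ Cᶜ := by
  have h := hμ.1.1 C Cᶜ disjoint_compl_right (Or.inl hC) (Or.inr hC.isClosed.isOpen_compl)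
    (Or.inr (by rw [Set.union_compl_self]; exact isOpen_univ))
  rw [Set.union_compl_self] at h
  exact h

theorem tm_split_open (hμ : IsSimpleTM μ) {U C : Set X} (hU : IsOpen U) (hC : IsCompact C)
    (hCU : C ⊆ U) : μ U = μ (U \ C) + μ C := by
  have h := hμ.1.1 (U \ C) C (disjoint_sdiff_self_left)
    (Or.inr (hU.sdiff hC.isClosed)) (Or.inl hC)
    (Or.inr (by rw [Set.diff_union_of_subset hCU]; exact hU))
  rw [Set.diff_union_of_subset hCU] at h
  exact h

theorem tm_univ_zero (hμ : IsSimpleTM μ) (h0 : μ Set.univ = 0) :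
    (∀ U : Set X, IsOpen U → μ U = 0) ∧ (∀ F : Set X, IsClosed F → μ F = 0) := by
  constructor
  · intro U hU
    exact le_antisymm (h0 ▸ tm_mono_oo hμ hU isOpen_univ (Set.subset_univ U)) (zero_le)
  · intro F hF
    exact le_antisymm (h0 ▸ tm_mono_fo hμ hF isOpen_univ (Set.subset_univ F)) (zero_le)

end Aux2

section Aux3
set_option linter.unusedSectionVars false

variable {X : Type*} [TopologicalSpace X] [T2Space X]

/-- The "value at level sets" functional attached to a simple topological measure. -/
noncomputable def pval (μ : Set X → ℝ≥0∞) (k : C_c(X, ℝ)) : ℝ :=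
  sSup (insert 0 {t : ℝ | 0 < t ∧ μ {x | t < k x} = 1})

/-- Positive part of `k`. -/
noncomputable def ccPos (k : C_c(X, ℝ)) : C_c(X, ℝ) :=
  compCc ⟨fun s => max s 0, continuous_id.max continuous_const⟩ (by simp) k

/-- Negative part of `k`. -/
noncomputable def ccNeg (k : C_c(X, ℝ)) : C_c(X, ℝ) :=
  compCc ⟨fun s => max (-s) 0, continuous_neg.max continuous_const⟩ (by simp) k

/-- The point value of a simple quasi-integral. -/
noncomputable def alphaV (μ : Set X → ℝ≥0∞) (k : C_c(X, ℝ)) : ℝ :=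
  pval μ (ccPos k) - pval μ (ccNeg k)

theorem ccPos_apply (k : C_c(X, ℝ)) (x : X) : ccPos k x = max (k x) 0 := rfl
theorem ccNeg_apply (k : C_c(X, ℝ)) (x : X) : ccNeg k x = max (-(k x)) 0 := rfl

theorem isOpen_level (k : C_c(X, ℝ)) (t : ℝ) : IsOpen {x | t < k x} :=
  isOpen_lt continuous_const k.continuous

variable {μ : Set X → ℝ≥0∞}

theorem pset_bdd (hμ : IsSimpleTM μ) (k : C_c(X, ℝ)) :
    BddAbove (insert 0 {t : ℝ | 0 < t ∧ μ {x | t < k x} = 1}) := by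
  obtain ⟨M, hM0, hM⟩ := cc_bound k
  refine ⟨M, fun t ht => ?_⟩
  rcases Set.mem_insert_iff.mp ht with rfl | ⟨htpos, hμt⟩
  · exact hM0
  · by_contra hMt
    push_neg at hMt
    have : {x | t < k x} = ∅ := by
      ext x
      simp only [Set.mem_setOf_eq, Set.mem_empty_iff_false, iff_false, not_lt]
      exact ((abs_le.mp (hM x)).2).trans hMt.le
    rw [this, tm_empty hμ] at hμt
    exact absurd hμt (by norm_num)

theorem pval_nonneg (hμ : IsSimpleTM μ) (k : C_c(X, ℝ)) : 0 ≤ pval μ k :=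
  le_csSup (pset_bdd hμ k) (Set.mem_insert _ _)

theorem pval_le (hμ : IsSimpleTM μ) {k : C_c(X, ℝ)} {M : ℝ} (hM : 0 ≤ M)
    (hk : ∀ x, k x ≤ M) : pval μ k ≤ M := by
  apply csSup_le (Set.insert_nonempty _ _)
  intro t ht
  rcases Set.mem_insert_iff.mp ht with rfl | ⟨htpos, hμt⟩
  · exact hM
  · by_contra hMt
    push_neg at hMt
    have : {x | t < k x} = ∅ := by
      ext x
      simp only [Set.mem_setOf_eq, Set.mem_empty_iff_false, iff_false, not_lt]
      exact (hk x).trans hMt.le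
    rw [this, tm_empty hμ] at hμt
    exact absurd hμt (by norm_num)

theorem pval_le_of_mem (hμ : IsSimpleTM μ) {k : C_c(X, ℝ)} {t : ℝ} (ht : 0 < t)
    (h1 : μ {x | t < k x} = 1) : t ≤ pval μ k :=
  le_csSup (pset_bdd hμ k) (Set.mem_insert_of_mem _ ⟨ht, h1⟩)

theorem pval_lt_mem (hμ : IsSimpleTM μ) {k : C_c(X, ℝ)} {t : ℝ} (ht : 0 < t)
    (htp : t < pval μ k) : μ {x | t < k x} = 1 := by
  obtain ⟨s, hs, hts⟩ := exists_lt_of_lt_csSup (Set.insert_nonempty _ _) htp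
  rcases Set.mem_insert_iff.mp hs with rfl | ⟨hspos, hμs⟩
  · exact absurd hts (not_lt.mpr ht.le)
  · exact tm_one_mono hμ (isOpen_level k s) (isOpen_level k t)
      (fun x hx => lt_trans hts hx) hμs

theorem pval_gt (hμ : IsSimpleTM μ) {k : C_c(X, ℝ)} {t : ℝ} (htp : pval μ k < t) :
    μ {x | t < k x} = 0 := by
  have ht : 0 < t := lt_of_le_of_lt (pval_nonneg hμ k) htp
  rcases hμ.2 _ (Or.inl (isOpen_level k t)) with h0 | h1
  · exact h0
  · exact absurd (pval_le_of_mem hμ ht h1) (not_le.mpr htp)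

theorem pval_pos_exists (hμ : IsSimpleTM μ) {k : C_c(X, ℝ)} (hp : 0 < pval μ k) :
    ∃ t : ℝ, 0 < t ∧ μ {x | t < k x} = 1 := by
  obtain ⟨s, hs, hts⟩ := exists_lt_of_lt_csSup (Set.insert_nonempty _ _) hp
  rcases Set.mem_insert_iff.mp hs with rfl | ⟨hspos, hμs⟩
  · exact absurd hts (lt_irrefl _)
  · exact ⟨s, hspos, hμs⟩

theorem pval_nonpos (hμ : IsSimpleTM μ) {k : C_c(X, ℝ)} (hk : ∀ x, k x ≤ 0) :
    pval μ k = 0 :=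
  le_antisymm (pval_le hμ le_rfl hk) (pval_nonneg hμ k)

theorem pval_le_add (hμ : IsSimpleTM μ) {k l : C_c(X, ℝ)} {e : ℝ} (he : 0 ≤ e)
    (h : ∀ x, k x ≤ l x + e) : pval μ k ≤ pval μ l + e := by
  apply csSup_le (Set.insert_nonempty _ _)
  intro t ht
  rcases Set.mem_insert_iff.mp ht with rfl | ⟨htpos, hμt⟩
  · have := pval_nonneg hμ l; linarith
  · rcases le_or_gt t e with hte | hte
    · have := pval_nonneg hμ l; linarith
    · have hsub : {x | t < k x} ⊆ {x | t - e < l x} := by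
        intro x hx
        simp only [Set.mem_setOf_eq] at hx ⊢
        have := h x; linarith
      have h1 : μ {x | t - e < l x} = 1 :=
        tm_one_mono hμ (isOpen_level k t) (isOpen_level l (t - e)) hsub hμt
      have := pval_le_of_mem hμ (by linarith : (0:ℝ) < t - e) h1
      linarith

theorem ccPos_of_nonneg {k : C_c(X, ℝ)} (hk : ∀ x, 0 ≤ k x) : ccPos k = k := by
  ext x; exact max_eq_left (hk x)

theorem ccNeg_of_nonneg {k : C_c(X, ℝ)} (hk : ∀ x, 0 ≤ k x) : ccNeg k = 0 := by
  ext x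
  simp only [ccNeg_apply, CompactlySupportedContinuousMap.coe_zero, Pi.zero_apply]
  exact max_eq_right (by linarith [hk x])

theorem alphaV_of_nonneg (hμ : IsSimpleTM μ) {k : C_c(X, ℝ)} (hk : ∀ x, 0 ≤ k x) :
    alphaV μ k = pval μ k := by
  unfold alphaV
  rw [ccPos_of_nonneg hk, ccNeg_of_nonneg hk,
    pval_nonpos hμ (k := 0) (fun x => le_of_eq rfl), sub_zero]

theorem level_ccPos (k : C_c(X, ℝ)) {t : ℝ} (ht : 0 < t) :
    {x | t < ccPos k x} = {x | t < k x} := by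
  ext x
  simp only [Set.mem_setOf_eq, ccPos_apply, lt_max_iff]
  exact ⟨fun h => h.resolve_right (not_lt.mpr ht.le), Or.inl⟩

theorem level_ccNeg (k : C_c(X, ℝ)) {t : ℝ} (ht : 0 < t) :
    {x | t < ccNeg k x} = {x | k x < -t} := by
  ext x
  simp only [Set.mem_setOf_eq, ccNeg_apply, lt_max_iff]
  constructor
  · intro h
    rcases h with h | h
    · linarith
    · exact absurd h (not_lt.mpr ht.le)
  · intro h; left; linarith

theorem pq_not_both (hμ : IsSimpleTM μ) (k : C_c(X, ℝ)) :
    ¬(0 < pval μ (ccPos k) ∧ 0 < pval μ (ccNeg k)) := by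
  rintro ⟨hp, hq⟩
  obtain ⟨t, ht, hμt⟩ := pval_pos_exists hμ hp
  obtain ⟨s, hs, hμs⟩ := pval_pos_exists hμ hq
  rw [level_ccPos k ht] at hμt
  rw [level_ccNeg k hs] at hμs
  refine tm_disj_opens hμ (isOpen_level k t) (isOpen_lt k.continuous continuous_const)
    ?_ hμt hμs
  rw [Set.disjoint_left]
  intro x hx hx'
  simp only [Set.mem_setOf_eq] at hx hx'
  have hx2 : k x < -s := hx'
  linarith

/-- The cross-algebra comparison trick. -/
theorem qi_bridge {ρ : C_c(X, ℝ) → ℝ} (hρ : IsQuasiIntegral ρ) {g h : C_c(X, ℝ)}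
    (hg0 : ∀ x, 0 ≤ g x) (hg1 : ∀ x, g x ≤ 1) (hh0 : ∀ x, 0 ≤ h x) (hh1 : ∀ x, h x ≤ 1)
    (hone : ∀ x ∈ tsupport ⇑g, h x = 1) : ρ g ≤ ρ h := by
  set u : C_c(X, ℝ) := g + h with hu
  have hux : ∀ x, u x = g x + h x := fun x => rfl
  set φ₁ : C(ℝ, ℝ) := ⟨fun s => max (s - 1) 0, by continuity⟩ with hφ₁
  set φ₂ : C(ℝ, ℝ) := ⟨fun s => min s 1, by continuity⟩ with hφ₂
  have hφ₁0 : φ₁ 0 = 0 := by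
    simp only [hφ₁, ContinuousMap.coe_mk, zero_sub]
    exact max_eq_right (by norm_num)
  have hφ₂0 : φ₂ 0 = 0 := by
    simp only [hφ₂, ContinuousMap.coe_mk]
    exact min_eq_left (by norm_num)
  have hgu : ∀ x, φ₁ (u x) = g x := by
    intro x
    simp only [hφ₁, ContinuousMap.coe_mk, hux]
    by_cases hx : g x = 0
    · rw [hx, zero_add]
      exact max_eq_right (by linarith [hh1 x])
    · have h1 : h x = 1 := hone x (subset_tsupport _ hx)
      rw [h1]
      have : g x + 1 - 1 = g x := by ring
      rw [this]
      exact max_eq_left (hg0 x)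
  have hhu : ∀ x, φ₂ (u x) = h x := by
    intro x
    simp only [hφ₂, ContinuousMap.coe_mk, hux]
    by_cases hx : g x = 0
    · rw [hx, zero_add]
      exact min_eq_left (hh1 x)
    · have h1 : h x = 1 := hone x (subset_tsupport _ hx)
      rw [h1]
      exact min_eq_right (by linarith [hg0 x])
  have e1 : compCc φ₁ hφ₁0 u = g := by ext x; exact hgu x
  have e2 : compCc φ₂ hφ₂0 u = h := by ext x; exact hhu x
  rw [← e1, ← e2]
  apply qi_mono_comp hρ u φ₁ φ₂ hφ₁0 hφ₂0
  intro x
  rw [hgu x, hhu x]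
  by_cases hx : g x = 0
  · rw [hx]; exact hh0 x
  · rw [hone x (subset_tsupport _ hx)]; exact hg1 x

end Aux3

section Aux4
set_option linter.unusedSectionVars false
set_option maxHeartbeats 1000000

variable {X : Type*} [TopologicalSpace X] [T2Space X]
variable {ρ : C_c(X, ℝ) → ℝ} {c : ℝ≥0∞} {μ : Set X → ℝ≥0∞}

theorem hqo_open (hdec : ∀ A : Set X, IsOpen A ∨ IsClosed A → qiMeas ρ A = c * μ A)
    {U : Set X} (hU : IsOpen U) : qiOpen ρ U = c * μ U := by
  rw [← qiMeas_isOpen ρ hU]; exact hdec U (Or.inl hU)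

theorem claimA_nonneg (hρ : IsQuasiIntegral ρ) (hc : 0 < c) (hc' : c ≠ ∞)
    (hμ : IsSimpleTM μ)
    (hdec : ∀ A : Set X, IsOpen A ∨ IsClosed A → qiMeas ρ A = c * μ A)
    (k : C_c(X, ℝ)) (hk : ∀ x, 0 ≤ k x) : ρ k = c.toReal * pval μ k := by
  obtain ⟨M₀, hM₀0, hM₀⟩ := cc_bound k
  have hMpos : (0:ℝ) < M₀ + 1 := by linarith
  have hkM : ∀ x, k x ≤ M₀ + 1 := fun x => by linarith [(abs_le.mp (hM₀ x)).2]
  set M := M₀ + 1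
  set p := pval μ k with hp
  have hp0 : 0 ≤ p := pval_nonneg hμ k
  have hcR : 0 < c.toReal := ENNReal.toReal_pos hc.ne' hc'
  -- upper bound
  have hub : ∀ ε : ℝ, 0 < ε → ρ k ≤ (p + ε) * c.toReal := by
    intro ε hε
    have hq : 0 < p + ε := by linarith
    set q := p + ε with hqdef
    set φ₁ : C(ℝ, ℝ) := ⟨fun s => min s q, by continuity⟩ with hφ₁
    set φ₂ : C(ℝ, ℝ) := ⟨fun s => max (s - q) 0, by continuity⟩ with hφ₂
    have hφ₁0 : φ₁ 0 = 0 := by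
      simp only [hφ₁, ContinuousMap.coe_mk]; exact min_eq_left hq.le
    have hφ₂0 : φ₂ 0 = 0 := by
      simp only [hφ₂, ContinuousMap.coe_mk, zero_sub]; exact max_eq_right (by linarith)
    have hdecomp : ρ k = ρ (compCc φ₁ hφ₁0 k) + ρ (compCc φ₂ hφ₂0 k) := by
      apply qi_eq_add_comp hρ k φ₁ φ₂ hφ₁0 hφ₂0
      intro s
      simp only [hφ₁, hφ₂, ContinuousMap.coe_mk]
      rcases le_total s q with h | h
      · rw [min_eq_left h, max_eq_right (by linarith)]; ring
      · rw [min_eq_right h, max_eq_left (by linarith)]; ring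
    -- second piece vanishes
    have h2zero : ρ (compCc φ₂ hφ₂0 k) = 0 := by
      have h2n : 0 ≤ ρ (compCc φ₂ hφ₂0 k) := hρ.pos _ (fun x => le_max_right _ _)
      have hμU : μ {x | p + ε/2 < k x} = 0 := pval_gt hμ (by rw [← hp]; linarith)
      have hsupp : tsupport ⇑(compCc φ₂ hφ₂0 k) ⊆ {x | p + ε/2 < k x} := by
        have hcl : IsClosed {x | q ≤ k x} := isClosed_le continuous_const k.continuous
        refine (closure_minimal ?_ hcl).trans ?_
        · intro x hx
          simp only [Function.mem_support, compCc_apply, hφ₂, ContinuousMap.coe_mk] at hx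
          simp only [Set.mem_setOf_eq]
          by_contra hcon
          push_neg at hcon
          exact hx (max_eq_right (by linarith))
        · intro x hx
          simp only [Set.mem_setOf_eq] at hx ⊢
          rw [hqdef] at hx; linarith
      have hb := qi_bound hρ (U := {x | p + ε/2 < k x}) (M := M) hMpos
        (fun x => le_max_right _ _)
        (fun x => by
          simp only [compCc_apply, hφ₂, ContinuousMap.coe_mk]
          rw [max_le_iff]
          exact ⟨by linarith [hkM x], hMpos.le⟩)
        hsupp
      rw [hqo_open hdec (isOpen_level k _), hμU, mul_zero, mul_zero] at hb
      have := ENNReal.ofReal_eq_zero.mp (le_antisymm hb (zero_le))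
      linarith
    -- first piece
    have h1le : ρ (compCc φ₁ hφ₁0 k) ≤ q * c.toReal := by
      set ψ : C(ℝ, ℝ) := ⟨fun s => min (max s 0 / q) 1, by
        apply Continuous.min _ continuous_const
        exact (continuous_id.max continuous_const).div_const q⟩ with hψ
      have hψ0 : ψ 0 = 0 := by
        simp only [hψ, ContinuousMap.coe_mk, max_self, zero_div]
        exact min_eq_left (by norm_num)
      have hident : compCc φ₁ hφ₁0 k = q • compCc ψ hψ0 k := by
        ext x
        simp only [compCc_apply, hφ₁, hψ, ContinuousMap.coe_mk,
          CompactlySupportedContinuousMap.smul_apply, smul_eq_mul]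
        rw [max_eq_left (hk x)]
        rw [mul_min_of_nonneg _ _ hq.le, mul_one, mul_div_cancel₀ _ hq.ne']
      have hψadm : ∀ x, 0 ≤ compCc ψ hψ0 k x ∧ compCc ψ hψ0 k x ≤ 1 := by
        intro x
        simp only [compCc_apply, hψ, ContinuousMap.coe_mk]
        constructor
        · apply le_min _ (by norm_num)
          positivity
        · exact min_le_right _ _
      have hψle : ENNReal.ofReal (ρ (compCc ψ hψ0 k)) ≤ c := by
        have := le_qiOpen ρ hψadm (Set.subset_univ _)
        rw [hqo_open hdec isOpen_univ] at this
        refine this.trans ?_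
        rcases hμ.2 Set.univ (Or.inl isOpen_univ) with h0 | h1
        · rw [h0, mul_zero]; exact zero_le
        · rw [h1, mul_one]
      have hψR : ρ (compCc ψ hψ0 k) ≤ c.toReal := by
        rcases le_or_gt (ρ (compCc ψ hψ0 k)) 0 with h | h
        · linarith
        · have := ENNReal.toReal_mono hc' hψle
          rwa [ENNReal.toReal_ofReal h.le] at this
      rw [hident, hρ.smul]
      exact mul_le_mul_of_nonneg_left hψR hq.le
    rw [hdecomp, h2zero, add_zero]
    exact h1le
  have hub' : ρ k ≤ p * c.toReal := by
    apply le_of_forall_sub_le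
    intro ε hε
    have := hub (ε / c.toReal) (by positivity)
    have heq : (p + ε / c.toReal) * c.toReal = p * c.toReal + ε := by
      field_simp
    linarith
  -- lower bound
  have hlb : p * c.toReal ≤ ρ k := by
    rcases eq_or_lt_of_le hp0 with heq | hppos
    · rw [← heq, zero_mul]; exact hρ.pos k hk
    · have key : ∀ t, 0 < t → t < p → t * c.toReal ≤ ρ k := by
        intro t ht htp
        have hμt : μ {x | t < k x} = 1 := pval_lt_mem hμ ht htp
        have hqiU : qiOpen ρ {x | t < k x} = c := by
          rw [hqo_open hdec (isOpen_level k t), hμt, mul_one]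
        have hstep : ∀ ε : ℝ, 0 < ε → (c.toReal - ε) * t ≤ ρ k := by
          intro ε hε
          obtain ⟨g, hg01, hgsupp, hgρ⟩ := qi_attain (ρ := ρ) (U := {x | t < k x})
            (r := c.toReal - ε) (by
              rw [hqiU]
              conv_rhs => rw [← ENNReal.ofReal_toReal hc']
              exact ENNReal.ofReal_lt_ofReal_iff hcR |>.mpr (by linarith))
          set ψₜ : C(ℝ, ℝ) := ⟨fun s => min (max ((2*s - t)/t) 0) 1, by
            apply Continuous.min _ continuous_const
            exact (((continuous_const.mul continuous_id).sub continuous_const).div_const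
              t).max continuous_const⟩ with hψₜ
          have hψₜ0 : ψₜ 0 = 0 := by
            simp only [hψₜ, ContinuousMap.coe_mk, mul_zero, zero_sub]
            rw [neg_div, div_self ht.ne']
            norm_num
          set h := compCc ψₜ hψₜ0 k with hh
          have hh01 : ∀ x, 0 ≤ h x ∧ h x ≤ 1 := by
            intro x
            simp only [hh, compCc_apply, hψₜ, ContinuousMap.coe_mk]
            constructor
            · exact le_min (le_max_right _ _) (by norm_num)
            · exact min_le_right _ _
          have hhone : ∀ x ∈ tsupport ⇑g, h x = 1 := by
            intro x hx
            have hkx : t < k x := hgsupp hx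
            simp only [hh, compCc_apply, hψₜ, ContinuousMap.coe_mk]
            rw [max_eq_left, min_eq_right]
            · rw [le_div_iff₀ ht]; linarith
            · rw [le_div_iff₀ ht]; linarith
          have hbridge : ρ g ≤ ρ h :=
            qi_bridge hρ (fun x => (hg01 x).1) (fun x => (hg01 x).2)
              (fun x => (hh01 x).1) (fun x => (hh01 x).2) hhone
          -- t • h is dominated by k inside B(k)
          have hdom : t * ρ h ≤ ρ k := by
            set φA : C(ℝ, ℝ) := t • ψₜ with hφA
            have hφA0 : φA 0 = 0 := by
              simp only [hφA, ContinuousMap.smul_apply, hψₜ0, smul_eq_mul, mul_zero]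
            set φB : C(ℝ, ℝ) := ContinuousMap.id ℝ - φA with hφB
            have hφB0 : φB 0 = 0 := by
              simp only [hφB, ContinuousMap.sub_apply, ContinuousMap.id_apply, hφA0, sub_zero]
            have hdecomp2 : ρ k = ρ (compCc φA hφA0 k) + ρ (compCc φB hφB0 k) := by
              apply qi_eq_add_comp hρ k φA φB hφA0 hφB0
              intro s
              simp only [hφB, ContinuousMap.sub_apply, ContinuousMap.id_apply]
              ring
            have hclaim : ∀ s : ℝ, 0 ≤ s → t * ψₜ s ≤ s := by
              intro s hs
              simp only [hψₜ, ContinuousMap.coe_mk]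
              rcases le_total ((2*s - t)/t) 0 with hle | hge
              · rw [max_eq_right hle, min_eq_left (by norm_num : (0:ℝ) ≤ 1), mul_zero]
                exact hs
              · rw [max_eq_left hge]
                have harith : t * ((2*s - t)/t) = 2*s - t := by field_simp
                rcases le_total ((2*s - t)/t) 1 with h1 | h1
                · rw [min_eq_left h1, harith]
                  rw [div_le_one ht] at h1
                  linarith
                · rw [min_eq_right h1, mul_one]
                  rw [le_div_iff₀ ht] at h1
                  linarith
            have hposB : 0 ≤ ρ (compCc φB hφB0 k) := by
              apply hρ.pos
              intro x
              simp only [compCc_apply, hφB, ContinuousMap.sub_apply, ContinuousMap.id_apply,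
                hφA, ContinuousMap.smul_apply, smul_eq_mul]
              have := hclaim (k x) (hk x)
              linarith
            have hAsmul : compCc φA hφA0 k = t • h := by
              ext x
              simp only [compCc_apply, hφA, ContinuousMap.smul_apply, smul_eq_mul,
                CompactlySupportedContinuousMap.smul_apply, hh]
            rw [hAsmul, hρ.smul] at hdecomp2
            linarith
          have : t * (c.toReal - ε) ≤ t * ρ h := by
            apply mul_le_mul_of_nonneg_left _ ht.le
            linarith
          linarith [mul_comm t (c.toReal - ε)]
        -- let ε → 0
        apply le_of_forall_sub_le
        intro ε hε
        have := hstep (ε / t) (by positivity)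
        have heq : (c.toReal - ε / t) * t = c.toReal * t - ε := by field_simp
        nlinarith
      -- let t → p
      apply le_of_forall_sub_le
      intro ε hε
      set m := min (ε / c.toReal) (p / 2) with hm
      have hm0 : 0 < m := lt_min (by positivity) (by linarith)
      have hmp : m < p := lt_of_le_of_lt (min_le_right _ _) (by linarith)
      have ht0 : 0 < p - m := by linarith
      have := key (p - m) ht0 (by linarith)
      have hmc : m * c.toReal ≤ ε := by
        have h1 : m ≤ ε / c.toReal := min_le_left _ _
        rw [← le_div_iff₀ hcR]
        exact h1
      nlinarith
  linarith [mul_comm p c.toReal]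

end Aux4

section Aux5
set_option linter.unusedSectionVars false
set_option maxHeartbeats 1000000

variable {X : Type*} [TopologicalSpace X] [T2Space X] {μ : Set X → ℝ≥0∞}

theorem isOpen_band (k : C_c(X, ℝ)) (a b : ℝ) : IsOpen {x | a < k x ∧ k x < b} := by
  have : {x | a < k x ∧ k x < b} = {x | a < k x} ∩ {x | k x < b} := rfl
  rw [this]
  exact (isOpen_level k a).inter (isOpen_lt k.continuous continuous_const)

/-- Negation of a `C_c` function via `compCc`. -/
noncomputable def negCc (k : C_c(X, ℝ)) : C_c(X, ℝ) :=
  compCc ⟨fun s => -s, continuous_neg⟩ neg_zero k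

theorem negCc_apply (k : C_c(X, ℝ)) (x : X) : negCc k x = -(k x) := rfl

theorem ccPos_negCc (k : C_c(X, ℝ)) : ccPos (negCc k) = ccNeg k := by ext x; rfl

theorem ccNeg_negCc (k : C_c(X, ℝ)) : ccNeg (negCc k) = ccPos k := by
  ext x
  simp only [ccNeg_apply, negCc_apply, neg_neg, ccPos_apply]

theorem alphaV_negCc (μ : Set X → ℝ≥0∞) (k : C_c(X, ℝ)) :
    alphaV μ (negCc k) = -alphaV μ k := by
  unfold alphaV
  rw [ccPos_negCc, ccNeg_negCc]
  ring

theorem pq_eq_of_pos (hμ : IsSimpleTM μ) {k : C_c(X, ℝ)} (ha : 0 < alphaV μ k) :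
    pval μ (ccPos k) = alphaV μ k ∧ pval μ (ccNeg k) = 0 := by
  have hQ0 : 0 ≤ pval μ (ccNeg k) := pval_nonneg hμ _
  have hQ : pval μ (ccNeg k) = 0 := by
    rcases eq_or_lt_of_le hQ0 with h | h
    · exact h.symm
    · have hP : 0 < pval μ (ccPos k) := by
        have := alphaV μ k
        unfold alphaV at ha
        linarith
      exact absurd ⟨hP, h⟩ (pq_not_both hμ k)
  constructor
  · unfold alphaV at *
    linarith
  · exact hQ

theorem tm_near_pos (hμ : IsSimpleTM μ) {k : C_c(X, ℝ)} (ha : 0 < alphaV μ k)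
    {δ : ℝ} (hδ : 0 < δ) :
    μ {x | alphaV μ k - δ < k x ∧ k x < alphaV μ k + δ} = 1 := by
  obtain ⟨hP, hQ⟩ := pq_eq_of_pos hμ ha
  set a := alphaV μ k with hadef
  clear_value a
  obtain ⟨δ', hδ'0, hδ'δ, hδ'a⟩ : ∃ δ' : ℝ, 0 < δ' ∧ δ' ≤ δ ∧ δ' ≤ a :=
    ⟨min δ a, lt_min hδ ha, min_le_left _ _, min_le_right _ _⟩
  obtain ⟨t₁, ht₁def⟩ : ∃ t₁ : ℝ, t₁ = a - δ'/2 := ⟨_, rfl⟩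
  have ht₁0 : 0 < t₁ := by rw [ht₁def]; linarith
  have hμt₁ : μ {x | t₁ < k x} = 1 := by
    have h := pval_lt_mem hμ ht₁0 (by rw [hP, ht₁def]; linarith : t₁ < pval μ (ccPos k))
    rwa [level_ccPos k ht₁0] at h
  have hμhigh : μ {x | a + δ'/4 < k x} = 0 := by
    have h := pval_gt hμ (by rw [hP]; linarith : pval μ (ccPos k) < a + δ'/4)

    rwa [level_ccPos k (by linarith)] at h
  set C := {x | a + δ'/2 ≤ k x} with hCdef
  have hCclosed : IsClosed C := isClosed_le continuous_const k.continuous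
  have hCcpt : IsCompact C := by
    apply IsCompact.of_isClosed_subset k.hasCompactSupport' hCclosed
    intro x hx
    apply subset_tsupport
    simp only [Function.mem_support]
    have h1 : a + δ'/2 ≤ k x := hx
    intro h0
    have h2 : k x = 0 := h0
    rw [h2] at h1
    linarith
  have hμC : μ C = 0 := by
    have hsub : C ⊆ {x | a + δ'/4 < k x} := by
      intro x hx
      have : a + δ'/2 ≤ k x := hx
      simp only [Set.mem_setOf_eq]
      linarith
    have := tm_mono_co hμ hCcpt (isOpen_level k _) hsub
    rw [hμhigh] at this
    exact le_antisymm this (zero_le)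
  have hCU : C ⊆ {x | t₁ < k x} := by
    intro x hx
    have h1 : a + δ'/2 ≤ k x := hx
    simp only [Set.mem_setOf_eq]
    rw [ht₁def]
    linarith
  have hsplit := tm_split_open hμ (isOpen_level k t₁) hCcpt hCU
  rw [hμt₁, hμC, add_zero] at hsplit
  have hdiff : {x | t₁ < k x} \ C = {x | t₁ < k x ∧ k x < a + δ'/2} := by
    ext x
    simp only [Set.mem_diff, Set.mem_setOf_eq, hCdef, not_le]
  rw [hdiff] at hsplit
  apply tm_one_mono hμ (isOpen_band k _ _) (isOpen_band k _ _) _ hsplit.symm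
  intro x hx
  obtain ⟨h1, h2⟩ := hx
  constructor
  · rw [ht₁def] at h1; linarith
  · linarith

theorem tm_near_zero (hμ : IsSimpleTM μ) (hX1 : μ Set.univ = 1) {k : C_c(X, ℝ)}
    (ha : alphaV μ k = 0) {δ : ℝ} (hδ : 0 < δ) :
    μ {x | alphaV μ k - δ < k x ∧ k x < alphaV μ k + δ} = 1 := by
  have hPQ : pval μ (ccPos k) = 0 ∧ pval μ (ccNeg k) = 0 := by
    have h1 : pval μ (ccPos k) = pval μ (ccNeg k) := by
      unfold alphaV at ha; linarith
    by_contra hcon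
    have hP : 0 < pval μ (ccPos k) := by
      rcases eq_or_lt_of_le (pval_nonneg hμ (ccPos k)) with h | h
      · exact absurd ⟨h.symm, h1 ▸ h.symm⟩ hcon
      · exact h
    exact pq_not_both hμ k ⟨hP, h1 ▸ hP⟩
  have hμ1 : μ {x | δ/2 < k x} = 0 := by
    have h := pval_gt hμ (k := ccPos k) (t := δ/2) (by rw [hPQ.1]; linarith)
    rwa [level_ccPos k (by linarith)] at h
  have hμ2 : μ {x | k x < -(δ/2)} = 0 := by
    have h := pval_gt hμ (k := ccNeg k) (t := δ/2) (by rw [hPQ.2]; linarith)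
    rwa [level_ccNeg k (by linarith)] at h
  set O := {x | δ/2 < k x} ∪ {x | k x < -(δ/2)} with hOdef
  have hO1 : IsOpen {x | δ/2 < k x} := isOpen_level k _
  have hO2 : IsOpen {x | k x < -(δ/2)} := isOpen_lt k.continuous continuous_const
  have hμO : μ O = 0 := by
    have hd : Disjoint {x | δ/2 < k x} {x | k x < -(δ/2)} := by
      rw [Set.disjoint_left]
      intro x hx hx'
      have h1 : δ/2 < k x := hx
      have h2 : k x < -(δ/2) := hx'
      linarith
    have h := hμ.1.1 _ _ hd (Or.inr hO1) (Or.inr hO2) (Or.inr (hO1.union hO2))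
    rw [hOdef, h, hμ1, hμ2, add_zero]
  set C := {x | δ ≤ k x ∨ k x ≤ -δ} with hCdef
  have hCclosed : IsClosed C := by
    have : C = {x | δ ≤ k x} ∪ {x | k x ≤ -δ} := rfl
    rw [this]
    exact (isClosed_le continuous_const k.continuous).union
      (isClosed_le k.continuous continuous_const)
  have hCsub : C ⊆ O := by
    intro x hx
    rcases hx with h | h
    · left; simp only [Set.mem_setOf_eq]; have : δ ≤ k x := h; linarith
    · right; simp only [Set.mem_setOf_eq]; have : k x ≤ -δ := h; linarith
  have hCcpt : IsCompact C := by
    apply IsCompact.of_isClosed_subset k.hasCompactSupport' hCclosed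
    intro x hx
    apply subset_tsupport
    simp only [Function.mem_support]
    intro h0
    have h2 : k x = 0 := h0
    rcases hx with h | h
    · have h1 : δ ≤ k x := h; rw [h2] at h1; linarith
    · have h1 : k x ≤ -δ := h; rw [h2] at h1; linarith
  have hμC : μ C = 0 := by
    have := tm_mono_co hμ hCcpt (hO1.union hO2) hCsub
    rw [hμO] at this
    exact le_antisymm this (zero_le)
  have hsplit := tm_split_compl hμ hCcpt
  rw [hX1, hμC, zero_add] at hsplit
  have hCc : Cᶜ = {x | alphaV μ k - δ < k x ∧ k x < alphaV μ k + δ} := by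
    ext x
    simp only [Set.mem_compl_iff, hCdef, Set.mem_setOf_eq, not_or, not_le, ha]
    constructor
    · rintro ⟨h1, h2⟩; exact ⟨by linarith, by linarith⟩
    · rintro ⟨h1, h2⟩; exact ⟨by linarith, by linarith⟩
  rw [← hCc, ← hsplit]

theorem tm_near (hμ : IsSimpleTM μ) (hX1 : μ Set.univ = 1) (k : C_c(X, ℝ))
    {δ : ℝ} (hδ : 0 < δ) :
    μ {x | alphaV μ k - δ < k x ∧ k x < alphaV μ k + δ} = 1 := by
  rcases lt_trichotomy (alphaV μ k) 0 with hneg | hzero | hpos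
  · have hpos' : 0 < alphaV μ (negCc k) := by rw [alphaV_negCc]; linarith
    have h := tm_near_pos hμ hpos' hδ
    rw [alphaV_negCc] at h
    have hset : {x | -alphaV μ k - δ < negCc k x ∧ negCc k x < -alphaV μ k + δ} =
        {x | alphaV μ k - δ < k x ∧ k x < alphaV μ k + δ} := by
      ext x
      simp only [Set.mem_setOf_eq, negCc_apply]
      constructor
      · rintro ⟨h1, h2⟩; exact ⟨by linarith, by linarith⟩
      · rintro ⟨h1, h2⟩; exact ⟨by linarith, by linarith⟩
    rwa [hset] at h
  · exact tm_near_zero hμ hX1 hzero hδ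
  · exact tm_near_pos hμ hpos hδ

theorem tm_conc (hμ : IsSimpleTM μ) (hX1 : μ Set.univ = 1) (k : C_c(X, ℝ))
    {F : Set ℝ} (hF : IsClosed F) (ha : alphaV μ k ∉ F) :
    μ {x | k x ∈ F} = 0 := by
  obtain ⟨ε, hε, hball⟩ := Metric.isOpen_iff.mp hF.isOpen_compl _ ha
  rw [Real.ball_eq_Ioo] at hball
  set G := {x | alphaV μ k - ε < k x ∧ k x < alphaV μ k + ε} with hGdef
  have hμG : μ G = 1 := tm_near hμ hX1 k hε
  obtain ⟨C, hCcpt, hCG, hμC⟩ := tm_inner hμ (isOpen_band k _ _) hμG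
  have hsplit := tm_split_compl hμ hCcpt
  rw [hX1, hμC] at hsplit
  have hμCc : μ Cᶜ = 0 := by
    by_contra hne
    have : (1 : ℝ≥0∞) < 1 + μ Cᶜ := ENNReal.lt_add_right (by norm_num) hne
    rw [← hsplit] at this
    exact absurd this (lt_irrefl _)
  have hsub : {x | k x ∈ F} ⊆ Cᶜ := by
    intro x hx
    simp only [Set.mem_compl_iff]
    intro hxC
    have hxG := hCG hxC
    obtain ⟨h1, h2⟩ := hxG
    have : k x ∈ Set.Ioo (alphaV μ k - ε) (alphaV μ k + ε) := ⟨h1, h2⟩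
    have := hball this
    exact this hx
  have hclosed : IsClosed {x | k x ∈ F} := IsClosed.preimage k.continuous hF
  have := tm_mono_fo hμ hclosed (hCcpt.isClosed.isOpen_compl) hsub
  rw [hμCc] at this
  exact le_antisymm this (zero_le)

theorem pval_comp (hμ : IsSimpleTM μ) (hX1 : μ Set.univ = 1) (k : C_c(X, ℝ))
    (ψ : C(ℝ, ℝ)) (hψ0 : ψ 0 = 0) (hψ : ∀ s, 0 ≤ ψ s) :
    pval μ (compCc ψ hψ0 k) = ψ (alphaV μ k) := by
  set a := alphaV μ k with hadef
  have hb : 0 ≤ ψ a := hψ a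
  apply le_antisymm
  · apply csSup_le (Set.insert_nonempty _ _)
    intro t ht
    rcases Set.mem_insert_iff.mp ht with rfl | ⟨htpos, hμt⟩
    · exact hb
    · by_contra hcon
      push_neg at hcon
      have hF : IsClosed (ψ ⁻¹' Set.Ici t) := IsClosed.preimage ψ.continuous isClosed_Ici
      have haF : a ∉ ψ ⁻¹' Set.Ici t := by
        simp only [Set.mem_preimage, Set.mem_Ici, not_le]
        exact hcon
      have h0 := tm_conc hμ hX1 k hF haF
      have hsub : {x | t < compCc ψ hψ0 k x} ⊆ {x | k x ∈ ψ ⁻¹' Set.Ici t} := by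
        intro x hx
        have : t < ψ (k x) := hx
        simp only [Set.mem_setOf_eq, Set.mem_preimage, Set.mem_Ici]
        linarith
      have hFc : IsClosed {x | k x ∈ ⇑ψ ⁻¹' Set.Ici t} := IsClosed.preimage k.continuous hF
      have := tm_mono_of hμ (isOpen_level _ t) hFc hsub
      rw [hμt, h0] at this
      exact absurd this (by norm_num)
  · rcases eq_or_lt_of_le hb with heq | hlt
    · rw [← heq]; exact pval_nonneg hμ _
    · apply le_of_forall_sub_le
      intro ε hε
      rcases le_or_gt (ψ a) ε with hle | hgt
      · have := pval_nonneg hμ (compCc ψ hψ0 k); linarith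
      · set t := ψ a - ε with htdef
        have ht0 : 0 < t := by linarith
        have hV : IsOpen (ψ ⁻¹' Set.Ioi t) := IsOpen.preimage ψ.continuous isOpen_Ioi
        have haV : a ∈ ψ ⁻¹' Set.Ioi t := by
          simp only [Set.mem_preimage, Set.mem_Ioi]; linarith
        obtain ⟨δ, hδ, hball⟩ := Metric.isOpen_iff.mp hV _ haV
        rw [Real.ball_eq_Ioo] at hball
        have hband := tm_near hμ hX1 k hδ
        have hsub : {x | a - δ < k x ∧ k x < a + δ} ⊆ {x | t < compCc ψ hψ0 k x} := by
          intro x hx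
          obtain ⟨h1, h2⟩ := hx
          have : k x ∈ Set.Ioo (a - δ) (a + δ) := ⟨h1, h2⟩
          have := hball this
          simp only [Set.mem_preimage, Set.mem_Ioi] at this
          exact this
        have h1 := tm_one_mono hμ (isOpen_band k _ _) (isOpen_level _ t) hsub hband
        exact pval_le_of_mem hμ ht0 h1
end Aux5

section Aux6
set_option linter.unusedSectionVars false
set_option maxHeartbeats 1000000

variable {X : Type*} [TopologicalSpace X] [T2Space X]
variable {ρ : C_c(X, ℝ) → ℝ} {c : ℝ≥0∞} {μ : Set X → ℝ≥0∞}

theorem qi_posneg (hρ : IsQuasiIntegral ρ) (g : C_c(X, ℝ)) :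
    ρ g = ρ (ccPos g) - ρ (ccNeg g) := by
  set φP : C(ℝ, ℝ) := ⟨fun s => max s 0, continuous_id.max continuous_const⟩ with hφP
  set φM : C(ℝ, ℝ) := ⟨fun s => min s 0, continuous_id.min continuous_const⟩ with hφM
  have hφP0 : φP 0 = 0 := by simp [hφP]
  have hφM0 : φM 0 = 0 := by simp [hφM]
  have hdecomp : ρ g = ρ (compCc φP hφP0 g) + ρ (compCc φM hφM0 g) := by
    apply qi_eq_add_comp hρ g φP φM hφP0 hφM0
    intro s
    simp only [hφP, hφM, ContinuousMap.coe_mk]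
    rcases le_total s 0 with h | h
    · rw [max_eq_right h, min_eq_left h, zero_add]
    · rw [max_eq_left h, min_eq_right h, add_zero]
  have h1 : compCc φP hφP0 g = ccPos g := by ext x; rfl
  have h2 : compCc φM hφM0 g = (-1 : ℝ) • ccNeg g := by
    ext x
    simp only [compCc_apply, hφM, ContinuousMap.coe_mk,
      CompactlySupportedContinuousMap.smul_apply, ccNeg_apply, smul_eq_mul]
    rcases le_total (g x) 0 with h | h
    · rw [min_eq_left h, max_eq_left (by linarith)]; ring
    · rw [min_eq_right h, max_eq_right (by linarith)]; ring
  rw [hdecomp, h1, h2, hρ.smul]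
  ring

theorem pval_univ_zero (hμ : IsSimpleTM μ) (h0 : μ Set.univ = 0) (k : C_c(X, ℝ)) :
    pval μ k = 0 := by
  apply le_antisymm _ (pval_nonneg hμ k)
  apply csSup_le (Set.insert_nonempty _ _)
  intro t ht
  rcases Set.mem_insert_iff.mp ht with rfl | ⟨htpos, hμt⟩
  · exact le_rfl
  · rw [(tm_univ_zero hμ h0).1 _ (isOpen_level k t)] at hμt
    exact absurd hμt (by norm_num)

theorem claimB (hρ : IsQuasiIntegral ρ) (hc : 0 < c) (hc' : c ≠ ∞)
    (hμ : IsSimpleTM μ)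
    (hdec : ∀ A : Set X, IsOpen A ∨ IsClosed A → qiMeas ρ A = c * μ A)
    (φ : C(ℝ, ℝ)) (hφ0 : φ 0 = 0) (k : C_c(X, ℝ)) :
    ρ (compCc φ hφ0 k) = c.toReal * φ (alphaV μ k) := by
  set φplus : C(ℝ, ℝ) := ⟨fun s => max (φ s) 0, φ.continuous.max continuous_const⟩ with hφp
  set φminus : C(ℝ, ℝ) := ⟨fun s => max (-φ s) 0,
    (φ.continuous.neg).max continuous_const⟩ with hφm
  have hφp0 : φplus 0 = 0 := by simp [hφp, hφ0]
  have hφm0 : φminus 0 = 0 := by simp [hφm, hφ0]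
  have hPeq : ccPos (compCc φ hφ0 k) = compCc φplus hφp0 k := by ext x; rfl
  have hMeq : ccNeg (compCc φ hφ0 k) = compCc φminus hφm0 k := by ext x; rfl
  have hsplit := qi_posneg hρ (compCc φ hφ0 k)
  rw [hPeq, hMeq] at hsplit
  rcases hμ.2 Set.univ (Or.inl isOpen_univ) with huniv0 | huniv1
  · -- trivial case: everything vanishes
    have hz : ∀ (ψ : C(ℝ, ℝ)) (hψ0 : ψ 0 = 0), ρ (compCc ψ hψ0 k) = 0 := by
      intro ψ hψ0
      have h := qi_posneg hρ (compCc ψ hψ0 k)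
      have hp : ρ (ccPos (compCc ψ hψ0 k)) =
          c.toReal * pval μ (ccPos (compCc ψ hψ0 k)) :=
        claimA_nonneg hρ hc hc' hμ hdec _ (fun x => le_max_right _ _)
      have hm : ρ (ccNeg (compCc ψ hψ0 k)) =
          c.toReal * pval μ (ccNeg (compCc ψ hψ0 k)) :=
        claimA_nonneg hρ hc hc' hμ hdec _ (fun x => le_max_right _ _)
      rw [pval_univ_zero hμ huniv0] at hp hm
      rw [h, hp, hm]
      ring
    have halpha : alphaV μ k = 0 := by
      unfold alphaV
      rw [pval_univ_zero hμ huniv0, pval_univ_zero hμ huniv0, sub_zero]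
    rw [hz φ hφ0, halpha, hφ0, mul_zero]
  · have hp : ρ (compCc φplus hφp0 k) = c.toReal * φplus (alphaV μ k) := by
      rw [claimA_nonneg hρ hc hc' hμ hdec _ (fun x => le_max_right _ _),
        pval_comp hμ huniv1 k φplus hφp0 (fun s => le_max_right _ _)]
    have hm : ρ (compCc φminus hφm0 k) = c.toReal * φminus (alphaV μ k) := by
      rw [claimA_nonneg hρ hc hc' hμ hdec _ (fun x => le_max_right _ _),
        pval_comp hμ huniv1 k φminus hφm0 (fun s => le_max_right _ _)]
    rw [hsplit, hp, hm]
    have : φplus (alphaV μ k) - φminus (alphaV μ k) = φ (alphaV μ k) := by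
      simp only [hφp, hφm, ContinuousMap.coe_mk]
      rcases le_total (φ (alphaV μ k)) 0 with h | h
      · rw [max_eq_right h, max_eq_left (by linarith)]; ring
      · rw [max_eq_left h, max_eq_right (by linarith)]; ring
    rw [← this]
    ring

theorem claimA (hρ : IsQuasiIntegral ρ) (hc : 0 < c) (hc' : c ≠ ∞)
    (hμ : IsSimpleTM μ)
    (hdec : ∀ A : Set X, IsOpen A ∨ IsClosed A → qiMeas ρ A = c * μ A)
    (k : C_c(X, ℝ)) : ρ k = c.toReal * alphaV μ k := by
  have hid : compCc (ContinuousMap.id ℝ) rfl k = k := by ext x; rfl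
  have := claimB hρ hc hc' hμ hdec (ContinuousMap.id ℝ) rfl k
  rwa [hid] at this

theorem alphaV_lipschitz (hμ : IsSimpleTM μ) {k l : C_c(X, ℝ)} {e : ℝ} (he : 0 ≤ e)
    (h : ∀ x, |k x - l x| ≤ e) : |alphaV μ k - alphaV μ l| ≤ 2 * e := by
  have hP1 : pval μ (ccPos k) ≤ pval μ (ccPos l) + e := by
    apply pval_le_add hμ he
    intro x
    have := abs_max_sub_max_le_abs (k x) (l x) 0
    have h2 := abs_le.mp (this.trans (h x))
    simp only [ccPos_apply]
    linarith [h2.2]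
  have hP2 : pval μ (ccPos l) ≤ pval μ (ccPos k) + e := by
    apply pval_le_add hμ he
    intro x
    have := abs_max_sub_max_le_abs (l x) (k x) 0
    have habs : |l x - k x| ≤ e := by rw [abs_sub_comm]; exact h x
    have h2 := abs_le.mp (this.trans habs)
    simp only [ccPos_apply]
    linarith [h2.2]
  have hN1 : pval μ (ccNeg k) ≤ pval μ (ccNeg l) + e := by
    apply pval_le_add hμ he
    intro x
    have := abs_max_sub_max_le_abs (-(k x)) (-(l x)) 0
    have habs : |(-(k x)) - (-(l x))| ≤ e := by
      rw [show (-(k x)) - (-(l x)) = -(k x - l x) by ring, abs_neg]; exact h x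
    have h2 := abs_le.mp (this.trans habs)
    simp only [ccNeg_apply]
    linarith [h2.2]
  have hN2 : pval μ (ccNeg l) ≤ pval μ (ccNeg k) + e := by
    apply pval_le_add hμ he
    intro x
    have := abs_max_sub_max_le_abs (-(l x)) (-(k x)) 0
    have habs : |(-(l x)) - (-(k x))| ≤ e := by
      rw [show (-(l x)) - (-(k x)) = -(l x - k x) by ring, abs_neg, abs_sub_comm]; exact h x
    have h2 := abs_le.mp (this.trans habs)
    simp only [ccNeg_apply]
    linarith [h2.2]
  unfold alphaV
  rw [abs_le]
  constructor <;> linarith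

end Aux6

section Aux7
set_option linter.unusedSectionVars false
set_option maxHeartbeats 1000000

variable {X Y : Type*} [TopologicalSpace X] [T2Space X] [TopologicalSpace Y] [T2Space Y]
variable {ρ : C_c(X, ℝ) → ℝ} {η : C_c(Y, ℝ) → ℝ} {c : ℝ≥0∞} {μ : Set X → ℝ≥0∞}

theorem fiberY_apply (f : C_c(X × Y, ℝ)) (y : Y) (x : X) : fiberY f y x = f (x, y) := rfl

theorem fiberY_smul (a : ℝ) (f : C_c(X × Y, ℝ)) (y : Y) :
    fiberY (a • f) y = a • fiberY f y := by
  ext x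
  simp only [fiberY_apply, CompactlySupportedContinuousMap.smul_apply, smul_eq_mul]

theorem fiberY_comp (f g : C_c(X × Y, ℝ)) (y : Y) (φ : C(ℝ, ℝ)) (hφ0 : φ 0 = 0)
    (hgf : ∀ p, g p = φ (f p)) : fiberY g y = compCc φ hφ0 (fiberY f y) := by
  ext x
  simp only [fiberY_apply, compCc_apply, hgf (x, y)]

theorem fiber_close (f : C_c(X × Y, ℝ)) (y₀ : Y) {ε : ℝ} (hε : 0 < ε) :
    ∃ N : Set Y, IsOpen N ∧ y₀ ∈ N ∧ ∀ y ∈ N, ∀ x, |f (x, y) - f (x, y₀)| ≤ ε := by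
  set K₁ := Prod.fst '' tsupport ⇑f with hK₁
  have hK₁c : IsCompact K₁ := f.hasCompactSupport'.image continuous_fst
  have hTopen : IsOpen {p : X × Y | |f p - f (p.1, y₀)| < ε} := by
    have hcont : Continuous fun p : X × Y => |f p - f (p.1, y₀)| := by
      apply Continuous.abs
      exact f.continuous.sub (f.continuous.comp (continuous_fst.prodMk continuous_const))
    exact isOpen_lt hcont continuous_const
  have hsub : K₁ ×ˢ ({y₀} : Set Y) ⊆ {p : X × Y | |f p - f (p.1, y₀)| < ε} := by
    rintro ⟨x, y⟩ ⟨_, hy⟩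
    rcases hy with rfl
    simp only [Set.mem_setOf_eq, sub_self, abs_zero]
    exact hε
  obtain ⟨u, v, hu, hv, hK₁u, hy₀v, huv⟩ :=
    generalized_tube_lemma hK₁c isCompact_singleton hTopen hsub
  refine ⟨v, hv, hy₀v rfl, fun y hy x => ?_⟩
  by_cases hx : x ∈ K₁
  · have h1 : (x, y) ∈ u ×ˢ v := ⟨hK₁u hx, hy⟩
    exact (huv h1).le
  · have hz : ∀ y' : Y, f (x, y') = 0 := by
      intro y'
      by_contra h
      exact hx ⟨(x, y'), subset_tsupport _ h, rfl⟩
    rw [hz y, hz y₀, sub_zero, abs_zero]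
    exact hε.le

theorem Tmap_eq (hρ : IsQuasiIntegral ρ) (hc : 0 < c) (hc' : c ≠ ∞) (hμ : IsSimpleTM μ)
    (hdec : ∀ A : Set X, IsOpen A ∨ IsClosed A → qiMeas ρ A = c * μ A)
    (f : C_c(X × Y, ℝ)) (y : Y) :
    Tmap ρ f y = c.toReal * alphaV μ (fiberY f y) :=
  claimA hρ hc hc' hμ hdec (fiberY f y)

theorem Tmap_cont (hρ : IsQuasiIntegral ρ) (hc : 0 < c) (hc' : c ≠ ∞) (hμ : IsSimpleTM μ)
    (hdec : ∀ A : Set X, IsOpen A ∨ IsClosed A → qiMeas ρ A = c * μ A)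
    (f : C_c(X × Y, ℝ)) : Continuous (Tmap ρ f) := by
  have hcR : (0:ℝ) ≤ c.toReal := ENNReal.toReal_nonneg
  rw [continuous_iff_continuousAt]
  intro y₀
  rw [ContinuousAt, Metric.tendsto_nhds]
  intro ε hε
  have h4 : (0:ℝ) < 4 * c.toReal + 1 := by positivity
  set ε' := ε / (4 * c.toReal + 1) with hε'def
  have hε'0 : 0 < ε' := by positivity
  obtain ⟨N, hNopen, hy₀N, hN⟩ := fiber_close f y₀ hε'0
  apply Filter.eventually_of_mem (hNopen.mem_nhds hy₀N)
  intro y hy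
  rw [Real.dist_eq, Tmap_eq hρ hc hc' hμ hdec f y, Tmap_eq hρ hc hc' hμ hdec f y₀]
  have hlip : |alphaV μ (fiberY f y) - alphaV μ (fiberY f y₀)| ≤ 2 * ε' :=
    alphaV_lipschitz hμ hε'0.le (fun x => hN y hy x)
  have habs : |c.toReal * alphaV μ (fiberY f y) - c.toReal * alphaV μ (fiberY f y₀)|
      = c.toReal * |alphaV μ (fiberY f y) - alphaV μ (fiberY f y₀)| := by
    rw [← mul_sub, abs_mul, abs_of_nonneg hcR]
  rw [habs]
  have hmul : c.toReal * |alphaV μ (fiberY f y) - alphaV μ (fiberY f y₀)|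
      ≤ c.toReal * (2 * ε') := mul_le_mul_of_nonneg_left hlip hcR
  have hεε : ε' * (4 * c.toReal + 1) = ε := div_mul_cancel₀ _ h4.ne'
  nlinarith [mul_nonneg hcR hε'0.le]

theorem Tmap_supp (hρ : IsQuasiIntegral ρ) (f : C_c(X × Y, ℝ)) :
    HasCompactSupport (Tmap ρ f) := by
  apply HasCompactSupport.intro (f.hasCompactSupport'.image continuous_snd)
  intro y hy
  have hfib : fiberY f y = 0 := by
    ext x
    simp only [fiberY_apply, CompactlySupportedContinuousMap.coe_zero, Pi.zero_apply]
    by_contra h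
    exact hy ⟨(x, y), subset_tsupport _ h, rfl⟩
  show ρ (fiberY f y) = 0
  rw [hfib]
  exact qi_zero hρ

theorem TCc_coe (hρ : IsQuasiIntegral ρ) (hc : 0 < c) (hc' : c ≠ ∞) (hμ : IsSimpleTM μ)
    (hdec : ∀ A : Set X, IsOpen A ∨ IsClosed A → qiMeas ρ A = c * μ A)
    (f : C_c(X × Y, ℝ)) : ⇑(TCc ρ f) = Tmap ρ f := by
  unfold TCc
  rw [dif_pos ⟨Tmap_cont hρ hc hc' hμ hdec f, Tmap_supp hρ f⟩]
  rfl

theorem TCc_eqCc (hρ : IsQuasiIntegral ρ) (hc : 0 < c) (hc' : c ≠ ∞) (hμ : IsSimpleTM μ)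
    (hdec : ∀ A : Set X, IsOpen A ∨ IsClosed A → qiMeas ρ A = c * μ A)
    (f : C_c(X × Y, ℝ)) (G : C_c(Y, ℝ)) (h : ∀ y, Tmap ρ f y = G y) : TCc ρ f = G := by
  ext y
  rw [congrFun (TCc_coe hρ hc hc' hμ hdec f) y, h y]

theorem prodQI_isQI (hρ : IsQuasiIntegral ρ) (hη : IsQuasiIntegral η)
    (hc : 0 < c) (hc' : c ≠ ∞) (hμ : IsSimpleTM μ)
    (hdec : ∀ A : Set X, IsOpen A ∨ IsClosed A → qiMeas ρ A = c * μ A) :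
    IsQuasiIntegral (prodQI η ρ) := by
  have hcR : (0:ℝ) < c.toReal := ENNReal.toReal_pos hc.ne' hc'
  refine ⟨?_, ?_, ?_⟩
  · intro a f
    have hT : TCc ρ (a • f) = a • TCc ρ f := by
      apply TCc_eqCc hρ hc hc' hμ hdec
      intro y
      show ρ (fiberY (a • f) y) = (a • TCc ρ f) y
      rw [fiberY_smul a f y, hρ.smul]
      have h2 : (a • TCc ρ f) y = a * (TCc ρ f) y := by
        simp only [CompactlySupportedContinuousMap.smul_apply, smul_eq_mul]
      rw [h2, congrFun (TCc_coe hρ hc hc' hμ hdec f) y]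
      rfl
    show η (TCc ρ (a • f)) = a * η (TCc ρ f)
    rw [hT, hη.smul]
  · intro f g h hg hh
    obtain ⟨φ, hφ0, hgf⟩ := hg
    obtain ⟨ψ, hψ0, hhf⟩ := hh
    set φc : C(ℝ, ℝ) := ⟨fun s => c.toReal * φ (s / c.toReal),
      continuous_const.mul (φ.continuous.comp (continuous_id.div_const _))⟩ with hφcdef
    have hφc0 : φc 0 = 0 := by
      simp only [hφcdef, ContinuousMap.coe_mk, zero_div, hφ0, mul_zero]
    set ψc : C(ℝ, ℝ) := ⟨fun s => c.toReal * ψ (s / c.toReal),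
      continuous_const.mul (ψ.continuous.comp (continuous_id.div_const _))⟩ with hψcdef
    have hψc0 : ψc 0 = 0 := by
      simp only [hψcdef, ContinuousMap.coe_mk, zero_div, hψ0, mul_zero]
    have hTf : ∀ y, (TCc ρ f) y = c.toReal * alphaV μ (fiberY f y) := by
      intro y
      rw [congrFun (TCc_coe hρ hc hc' hμ hdec f) y]
      exact Tmap_eq hρ hc hc' hμ hdec f y
    have hTg : TCc ρ g = compCc φc hφc0 (TCc ρ f) := by
      apply TCc_eqCc hρ hc hc' hμ hdec
      intro y
      show ρ (fiberY g y) = φc ((TCc ρ f) y)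
      rw [fiberY_comp f g y φ hφ0 hgf, claimB hρ hc hc' hμ hdec φ hφ0 (fiberY f y)]
      simp only [hφcdef, ContinuousMap.coe_mk, hTf y]
      rw [mul_div_cancel_left₀ _ hcR.ne']
    have hTh : TCc ρ h = compCc ψc hψc0 (TCc ρ f) := by
      apply TCc_eqCc hρ hc hc' hμ hdec
      intro y
      show ρ (fiberY h y) = ψc ((TCc ρ f) y)
      rw [fiberY_comp f h y ψ hψ0 hhf, claimB hρ hc hc' hμ hdec ψ hψ0 (fiberY f y)]
      simp only [hψcdef, ContinuousMap.coe_mk, hTf y]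
      rw [mul_div_cancel_left₀ _ hcR.ne']
    have hTgh : TCc ρ (g + h) = compCc φc hφc0 (TCc ρ f) + compCc ψc hψc0 (TCc ρ f) := by
      apply TCc_eqCc hρ hc hc' hμ hdec
      intro y
      show ρ (fiberY (g + h) y) = _
      have hfib : fiberY (g + h) y = compCc (φ + ψ) (by
          simp only [ContinuousMap.add_apply, hφ0, hψ0, add_zero]) (fiberY f y) := by
        ext x
        simp only [fiberY_apply, compCc_apply, ContinuousMap.add_apply,
          CompactlySupportedContinuousMap.add_apply]
        rw [hgf (x, y), hhf (x, y)]
      rw [hfib, claimB hρ hc hc' hμ hdec (φ + ψ) _ (fiberY f y)]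
      have hR : (compCc φc hφc0 (TCc ρ f) + compCc ψc hψc0 (TCc ρ f)) y
          = φc ((TCc ρ f) y) + ψc ((TCc ρ f) y) := rfl
      rw [hR]
      simp only [hφcdef, hψcdef, ContinuousMap.coe_mk, ContinuousMap.add_apply, hTf y]
      rw [mul_div_cancel_left₀ _ hcR.ne']
      ring
    show η (TCc ρ (g + h)) = η (TCc ρ g) + η (TCc ρ h)
    rw [hTgh, hTg, hTh]
    exact hη.add (TCc ρ f) _ _ ⟨φc, hφc0, fun y => rfl⟩ ⟨ψc, hψc0, fun y => rfl⟩
  · intro f hf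
    apply hη.pos
    intro y
    rw [congrFun (TCc_coe hρ hc hc' hμ hdec f) y]
    exact hρ.pos (fiberY f y) (fun x => hf (x, y))

end Aux7

section Aux8
set_option linter.unusedSectionVars false
set_option maxHeartbeats 1000000

variable {X Y : Type*} [TopologicalSpace X] [T2Space X] [TopologicalSpace Y] [T2Space Y]
variable {ρ : C_c(X, ℝ) → ℝ} {η : C_c(Y, ℝ) → ℝ} {c : ℝ≥0∞} {μ : Set X → ℝ≥0∞}

theorem part2_le (hρ : IsQuasiIntegral ρ) (hη : IsQuasiIntegral η)
    (hc : 0 < c) (hc' : c ≠ ∞) (hμ : IsSimpleTM μ)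
    (hdec : ∀ A : Set X, IsOpen A ∨ IsClosed A → qiMeas ρ A = c * μ A)
    (hνcf : ∀ K : Set Y, IsCompact K → qiMeas η K ≠ ∞)
    {A : Set (X × Y)} (hA : IsOpen A) :
    qiOpen (prodQI η ρ) A ≤ c * qiOpen η {y | qiMeas ρ {x | (x, y) ∈ A} = c} := by
  set W := {y | qiMeas ρ {x | (x, y) ∈ A} = c} with hWdef
  have hcR : (0:ℝ) < c.toReal := ENNReal.toReal_pos hc.ne' hc'
  apply iSup₂_le
  intro f hf
  obtain ⟨hf01, hfsupp⟩ := hf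
  have hfib0 : ∀ (y : Y) (x : X), 0 ≤ fiberY f y x := fun y x => (hf01 (x, y)).1
  have halpha_eq : ∀ y, alphaV μ (fiberY f y) = pval μ (fiberY f y) :=
    fun y => alphaV_of_nonneg hμ (hfib0 y)
  have halpha0 : ∀ y, 0 ≤ alphaV μ (fiberY f y) :=
    fun y => (halpha_eq y) ▸ pval_nonneg hμ _
  have halpha1 : ∀ y, alphaV μ (fiberY f y) ≤ 1 :=
    fun y => (halpha_eq y) ▸ pval_le hμ zero_le_one (fun x => (hf01 (x, y)).2)
  have hTf : ∀ y, (TCc ρ f) y = c.toReal * alphaV μ (fiberY f y) := by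
    intro y
    rw [congrFun (TCc_coe hρ hc hc' hμ hdec f) y]
    exact Tmap_eq hρ hc hc' hμ hdec f y
  have hWsub : ∀ y, 0 < alphaV μ (fiberY f y) → y ∈ W := by
    intro y hy
    rw [halpha_eq y] at hy
    obtain ⟨τ, hτ, hμτ⟩ := pval_pos_exists hμ hy
    have hAy : IsOpen {x | (x, y) ∈ A} := hA.preimage (continuous_id.prodMk continuous_const)
    have hsub : {x | τ < fiberY f y x} ⊆ {x | (x, y) ∈ A} := by
      intro x hx
      have h1 : τ < f (x, y) := hx
      apply hfsupp
      apply subset_tsupport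
      simp only [Function.mem_support]
      intro h0
      rw [h0] at h1; linarith
    have hμAy := tm_one_mono hμ (isOpen_level _ τ) hAy hsub hμτ
    show qiMeas ρ {x | (x, y) ∈ A} = c
    rw [hdec _ (Or.inl hAy), hμAy, mul_one]
  set K₂ := Prod.snd '' tsupport ⇑f with hK₂def
  have hK₂ : IsCompact K₂ := f.hasCompactSupport'.image continuous_snd
  obtain ⟨U₀, hU₀o, hK₂U₀, hDfin⟩ :
      ∃ U₀ : Set Y, IsOpen U₀ ∧ K₂ ⊆ U₀ ∧ qiOpen η U₀ < ∞ := by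
    have h := hνcf K₂ hK₂
    rw [qiMeas_eq_iInf] at h
    have hlt : (⨅ (U : Set Y) (_ : IsOpen U ∧ K₂ ⊆ U), qiOpen η U) < ∞ :=
      lt_top_iff_ne_top.mpr h
    obtain ⟨U₀, hU₀⟩ := iInf_lt_iff.mp hlt
    obtain ⟨hP, hlt'⟩ := iInf_lt_iff.mp hU₀
    exact ⟨U₀, hP.1, hP.2, hlt'⟩
  have hTsupp : tsupport (⇑(TCc ρ f)) ⊆ K₂ := by
    apply closure_minimal _ hK₂.isClosed
    intro y hy
    simp only [Function.mem_support] at hy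
    by_contra hyK
    apply hy
    rw [congrFun (TCc_coe hρ hc hc' hμ hdec f) y]
    have hfib : fiberY f y = 0 := by
      ext x
      simp only [fiberY_apply, CompactlySupportedContinuousMap.coe_zero, Pi.zero_apply]
      by_contra h
      exact hyK ⟨(x, y), subset_tsupport _ h, rfl⟩
    show ρ (fiberY f y) = 0
    rw [hfib]
    exact qi_zero hρ
  -- the ε-estimate
  have hmain : ∀ ε : ℝ, 0 < ε → ENNReal.ofReal (η (TCc ρ f)) ≤
      c * qiOpen η W + ENNReal.ofReal (c.toReal * ε) * qiOpen η U₀ := by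
    intro ε hε
    have hq : 0 < c.toReal * ε := by positivity
    set φε : C(ℝ, ℝ) := ⟨fun s => max (s - c.toReal * ε) 0, by continuity⟩ with hφεdef
    set ψε : C(ℝ, ℝ) := ⟨fun s => min s (c.toReal * ε), by continuity⟩ with hψεdef
    have hφε0 : φε 0 = 0 := by
      simp only [hφεdef, ContinuousMap.coe_mk, zero_sub]
      exact max_eq_right (by linarith)
    have hψε0 : ψε 0 = 0 := by
      simp only [hψεdef, ContinuousMap.coe_mk]
      exact min_eq_left hq.le
    have hdecomp : η (TCc ρ f) =
        η (compCc φε hφε0 (TCc ρ f)) + η (compCc ψε hψε0 (TCc ρ f)) := by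
      apply qi_eq_add_comp hη (TCc ρ f) φε ψε hφε0 hψε0
      intro s
      simp only [hφεdef, hψεdef, ContinuousMap.coe_mk]
      rcases le_total s (c.toReal * ε) with h | h
      · rw [max_eq_right (by linarith), min_eq_left h]; ring
      · rw [max_eq_left (by linarith), min_eq_right h]; ring
    set gε := compCc ⟨fun s => max (s / c.toReal - ε) 0, by continuity⟩
      (by simp only [ContinuousMap.coe_mk, zero_div, zero_sub]
          exact max_eq_right (by linarith)) (TCc ρ f) with hgεdef
    have hgε_apply : ∀ y, gε y = max (alphaV μ (fiberY f y) - ε) 0 := by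
      intro y
      show max ((TCc ρ f) y / c.toReal - ε) 0 = _
      rw [hTf y, mul_div_cancel_left₀ _ hcR.ne']
    have hφeq : compCc φε hφε0 (TCc ρ f) = c.toReal • gε := by
      ext y
      show max ((TCc ρ f) y - c.toReal * ε) 0 = c.toReal • (gε y)
      rw [hgε_apply y, smul_eq_mul, mul_max_of_nonneg _ _ hcR.le, mul_zero, mul_sub, hTf y]
    have hgε01 : ∀ y, 0 ≤ gε y ∧ gε y ≤ 1 := by
      intro y
      rw [hgε_apply y]
      constructor
      · exact le_max_right _ _
      · rw [max_le_iff]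
        exact ⟨by linarith [halpha1 y], by norm_num⟩
    have hgεsupp : tsupport ⇑gε ⊆ W := by
      have hacont : Continuous fun y => alphaV μ (fiberY f y) := by
        have heq : (fun y => alphaV μ (fiberY f y)) = fun y => (TCc ρ f) y / c.toReal := by
          funext y
          rw [hTf y, mul_div_cancel_left₀ _ hcR.ne']
        rw [heq]
        exact (TCc ρ f).continuous.div_const _
      have hclosed : IsClosed {y | ε ≤ alphaV μ (fiberY f y)} :=
        isClosed_le continuous_const hacont
      refine (closure_minimal ?_ hclosed).trans ?_
      · intro y hy
        simp only [Function.mem_support, hgε_apply y] at hy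
        simp only [Set.mem_setOf_eq]
        by_contra hcon
        push_neg at hcon
        exact hy (max_eq_right (by linarith))
      · intro y hy
        exact hWsub y (lt_of_lt_of_le hε hy)
    have h1 : ENNReal.ofReal (η gε) ≤ qiOpen η W := le_qiOpen η hgε01 hgεsupp
    have hψsupp : tsupport ⇑(compCc ψε hψε0 (TCc ρ f)) ⊆ U₀ := by
      refine (closure_minimal ?_ (isClosed_tsupport (⇑(TCc ρ f)))).trans
        (hTsupp.trans hK₂U₀)
      intro y hy
      simp only [Function.mem_support, compCc_apply] at hy
      apply subset_tsupport
      simp only [Function.mem_support]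
      intro h0
      rw [h0, hψε0] at hy
      exact hy rfl
    have h2 : ENNReal.ofReal (η (compCc ψε hψε0 (TCc ρ f))) ≤
        ENNReal.ofReal (c.toReal * ε) * qiOpen η U₀ := by
      apply qi_bound hη hq _ _ hψsupp
      · intro y
        show 0 ≤ min ((TCc ρ f) y) (c.toReal * ε)
        apply le_min _ hq.le
        rw [hTf y]
        exact mul_nonneg hcR.le (halpha0 y)
      · intro y
        exact min_le_right _ _
    have hηgε0 : 0 ≤ η gε := hη.pos gε (fun y => (hgε01 y).1)
    have hφval : η (compCc φε hφε0 (TCc ρ f)) = c.toReal * η gε := by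
      rw [hφeq, hη.smul]
    calc ENNReal.ofReal (η (TCc ρ f))
        = ENNReal.ofReal (c.toReal * η gε + η (compCc ψε hψε0 (TCc ρ f))) := by
          rw [hdecomp, hφval]
      _ ≤ ENNReal.ofReal (c.toReal * η gε) +
          ENNReal.ofReal (η (compCc ψε hψε0 (TCc ρ f))) := ENNReal.ofReal_add_le
      _ ≤ c * qiOpen η W + ENNReal.ofReal (c.toReal * ε) * qiOpen η U₀ := by
          apply add_le_add _ h2
          rw [ENNReal.ofReal_mul hcR.le, ENNReal.ofReal_toReal hc']
          exact mul_le_mul_right h1 c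
  apply ENNReal.le_of_forall_pos_le_add
  intro ε hε hWfin
  have hD : qiOpen η U₀ ≠ ⊤ := hDfin.ne
  have hDt : (0:ℝ) ≤ (qiOpen η U₀).toReal := ENNReal.toReal_nonneg
  have hden : (0:ℝ) < c.toReal * ((qiOpen η U₀).toReal + 1) := by positivity
  have hεR : (0:ℝ) < (ε:ℝ) := hε
  set δ := (ε:ℝ) / (c.toReal * ((qiOpen η U₀).toReal + 1)) with hδdef
  have hδ0 : 0 < δ := by positivity
  refine (hmain δ hδ0).trans (add_le_add_right ?_ _)
  have hDeq : qiOpen η U₀ = ENNReal.ofReal ((qiOpen η U₀).toReal) :=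
    (ENNReal.ofReal_toReal hD).symm
  rw [hDeq, ← ENNReal.ofReal_mul (by positivity)]
  rw [← ENNReal.ofReal_coe_nnreal]
  apply ENNReal.ofReal_le_ofReal
  have h1 : δ * (c.toReal * ((qiOpen η U₀).toReal + 1)) = (ε:ℝ) :=
    div_mul_cancel₀ _ hden.ne'
  nlinarith [mul_nonneg (mul_nonneg hcR.le hδ0.le) hDt]

end Aux8

section Aux9
set_option linter.unusedSectionVars false
set_option maxHeartbeats 1000000

variable {X Y : Type*} [TopologicalSpace X] [T2Space X] [LocallyCompactSpace X]
  [TopologicalSpace Y] [T2Space Y] [LocallyCompactSpace Y]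
variable {ρ : C_c(X, ℝ) → ℝ} {η : C_c(Y, ℝ) → ℝ} {c : ℝ≥0∞} {μ : Set X → ℝ≥0∞}

theorem part2_ge (hρ : IsQuasiIntegral ρ) (hη : IsQuasiIntegral η)
    (hc : 0 < c) (hc' : c ≠ ∞) (hμ : IsSimpleTM μ)
    (hdec : ∀ A : Set X, IsOpen A ∨ IsClosed A → qiMeas ρ A = c * μ A)
    {A : Set (X × Y)} (hA : IsOpen A) :
    c * qiOpen η {y | qiMeas ρ {x | (x, y) ∈ A} = c} ≤ qiOpen (prodQI η ρ) A := by
  set W := {y | qiMeas ρ {x | (x, y) ∈ A} = c} with hWdef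
  have hcR : (0:ℝ) < c.toReal := ENNReal.toReal_pos hc.ne' hc'
  unfold qiOpen
  rw [ENNReal.mul_iSup]
  apply iSup_le
  intro g
  rw [ENNReal.mul_iSup]
  apply iSup_le
  intro hg
  obtain ⟨hg01, hgsupp⟩ := hg
  by_cases hKe : tsupport ⇑g = ∅
  · have hg0 : ∀ y, g y = 0 := by
      intro y
      apply image_eq_zero_of_notMem_tsupport
      rw [hKe]
      exact Set.notMem_empty y
    have : g = 0 := by ext y; simp [hg0 y]
    rw [this, qi_zero hη]
    simp
  have hKc : IsCompact (tsupport ⇑g) := g.hasCompactSupport'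
  -- data for each point of the support
  have hdata : ∀ y ∈ tsupport ⇑g, ∃ (N : Set Y) (h : C_c(X, ℝ)) (C : Set X),
      IsOpen N ∧ y ∈ N ∧ IsCompact C ∧ μ C = 1 ∧ (∀ x, 0 ≤ h x ∧ h x ≤ 1) ∧
      (∀ x ∈ C, h x = 1) ∧ (tsupport ⇑h) ×ˢ N ⊆ A := by
    intro y hy
    have hyW : y ∈ W := hgsupp hy
    have hAy : IsOpen {x | (x, y) ∈ A} := hA.preimage (continuous_id.prodMk continuous_const)
    have hμAy : μ {x | (x, y) ∈ A} = 1 := by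
      have hq : qiMeas ρ {x | (x, y) ∈ A} = c := hyW
      rw [hdec _ (Or.inl hAy)] at hq
      rcases hμ.2 _ (Or.inl hAy) with h0 | h1
      · rw [h0, mul_zero] at hq; exact absurd hq.symm hc.ne'
      · exact h1
    obtain ⟨C, hCcpt, hCA, hμC⟩ := tm_inner hμ hAy hμAy
    obtain ⟨L, hLcpt, hCL, hLA⟩ := exists_compact_between hCcpt hAy hCA
    have hLy : L ×ˢ ({y} : Set Y) ⊆ A := by
      rintro ⟨x, y'⟩ ⟨hx, hy'⟩
      rcases hy' with rfl
      exact hLA hx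
    obtain ⟨u, v, hu, hv, hLu, hyv, huv⟩ :=
      generalized_tube_lemma hLcpt isCompact_singleton hA hLy
    have hclos : IsCompact (closure (interior L)) :=
      hLcpt.of_isClosed_subset isClosed_closure
        (closure_minimal interior_subset hLcpt.isClosed)
    obtain ⟨h, hhsupp, hhone, hh01⟩ := exists_tsupport_one_of_isOpen_isClosed
      isOpen_interior hclos hCcpt.isClosed hCL
    have hhcs : HasCompactSupport h :=
      hLcpt.of_isClosed_subset (isClosed_tsupport ⇑h) (hhsupp.trans interior_subset)
    refine ⟨v, ⟨h, hhcs⟩, C, hv, hyv rfl, hCcpt, hμC, ?_, ?_, ?_⟩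
    · intro x
      exact ⟨(hh01 x).1, (hh01 x).2⟩
    · intro x hx
      exact hhone hx
    · have hsub : tsupport ⇑h ⊆ u := hhsupp.trans (interior_subset.trans hLu)
      intro p hp
      exact huv ⟨hsub hp.1, hp.2⟩
  choose! N hfun Cfun hNopen hyN hCcpt hμC hh01 hhone hsubA using hdata
  obtain ⟨t, htK, hcov⟩ := hKc.elim_nhds_subcover N
    (fun y hy => (hNopen y hy).mem_nhds (hyN y hy))
  obtain ⟨D, hDcpt, hDN, hDcover⟩ := hKc.finite_compact_cover t N
    (fun z hz => hNopen z (htK z hz)) hcov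
  -- Urysohn functions on Y
  have hσdata : ∀ z ∈ t, ∃ σ : C(Y, ℝ), tsupport ⇑σ ⊆ N z ∧ (∀ y ∈ D z, σ y = 1) ∧
      ∀ y, 0 ≤ σ y ∧ σ y ≤ 1 := by
    intro z hz
    obtain ⟨L, hLcpt, hDL, hLN⟩ := exists_compact_between (hDcpt z)
      (hNopen z (htK z hz)) (hDN z)
    have hclos : IsCompact (closure (interior L)) :=
      hLcpt.of_isClosed_subset isClosed_closure
        (closure_minimal interior_subset hLcpt.isClosed)
    obtain ⟨σ, h1, h2, h3⟩ := exists_tsupport_one_of_isOpen_isClosed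
      isOpen_interior hclos (hDcpt z).isClosed hDL
    exact ⟨σ, h1.trans (interior_subset.trans hLN), fun y hy => h2 hy,
      fun y => ⟨(h3 y).1, (h3 y).2⟩⟩
  choose! σ hσsupp hσone hσ01 using hσdata
  -- the test function
  set F : X × Y → ℝ := fun p => min (g p.2) (∑ z ∈ t, min (hfun z p.1) (σ z p.2)) with hFdef
  have hsum_nonneg : ∀ p : X × Y, 0 ≤ ∑ z ∈ t, min (hfun z p.1) (σ z p.2) := by
    intro p
    apply Finset.sum_nonneg
    intro z hz
    exact le_min (hh01 z (htK z hz) p.1).1 (hσ01 z hz p.2).1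
  have hF0 : ∀ p, 0 ≤ F p := fun p => le_min (hg01 p.2).1 (hsum_nonneg p)
  have hF1 : ∀ p, F p ≤ 1 := fun p => (min_le_left _ _).trans (hg01 p.2).2
  have hFcont : Continuous F := by
    apply Continuous.min (g.continuous.comp continuous_snd)
    apply continuous_finset_sum
    intro z _
    exact ((hfun z).continuous.comp continuous_fst).min ((σ z).continuous.comp continuous_snd)
  have hFne : ∀ p : X × Y, F p ≠ 0 → ∃ z ∈ t, p.1 ∈ tsupport ⇑(hfun z) ∧
      p.2 ∈ tsupport ⇑(σ z) := by
    intro p hp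
    have hSum : ∑ z ∈ t, min (hfun z p.1) (σ z p.2) ≠ 0 := by
      intro h0
      apply hp
      show min (g p.2) (∑ z ∈ t, min ((hfun z) p.1) ((σ z) p.2)) = 0
      rw [h0]
      exact min_eq_right (hg01 p.2).1
    obtain ⟨z, hz, hterm⟩ := Finset.exists_ne_zero_of_sum_ne_zero hSum
    have hhz : hfun z p.1 ≠ 0 := by
      intro h0
      apply hterm
      rw [h0]
      exact min_eq_left (hσ01 z hz p.2).1
    have hσz : σ z p.2 ≠ 0 := by
      intro h0
      apply hterm
      rw [h0]
      exact min_eq_right (hh01 z (htK z hz) p.1).1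
    exact ⟨z, hz, subset_tsupport _ hhz, subset_tsupport _ hσz⟩
  have hFcs : HasCompactSupport F := by
    apply HasCompactSupport.intro
      ((t.isCompact_biUnion (fun z _ => (hfun z).hasCompactSupport')).prod hKc)
    intro p hp
    by_contra hne
    apply hp
    obtain ⟨z, hz, h1, _⟩ := hFne p hne
    have hgp : g p.2 ≠ 0 := by
      intro h0
      apply hne
      show min (g p.2) (∑ z ∈ t, min ((hfun z) p.1) ((σ z) p.2)) = 0
      rw [h0]
      exact min_eq_left (hsum_nonneg p)
    exact ⟨Set.mem_biUnion hz h1, subset_tsupport _ hgp⟩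
  set fCc : C_c(X × Y, ℝ) := ⟨⟨F, hFcont⟩, hFcs⟩ with hfCcdef
  have hfCc_apply : ∀ p, fCc p = F p := fun p => rfl
  have hadm : ∀ p, 0 ≤ fCc p ∧ fCc p ≤ 1 := fun p => ⟨hF0 p, hF1 p⟩
  have hsuppA : tsupport ⇑fCc ⊆ A := by
    have hclosed : IsClosed (⋃ z ∈ t, tsupport ⇑(hfun z) ×ˢ tsupport ⇑(σ z)) := by
      apply isClosed_biUnion_finset
      intro z _
      exact (isClosed_tsupport _).prod (isClosed_tsupport _)
    refine (closure_minimal ?_ hclosed).trans ?_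
    · intro p hp
      obtain ⟨z, hz, h1, h2⟩ := hFne p hp
      exact Set.mem_biUnion hz ⟨h1, h2⟩
    · intro p hp
      simp only [Set.mem_iUnion] at hp
      obtain ⟨z, hz, hp1, hp2⟩ := hp
      exact hsubA z (htK z hz) ⟨hp1, hσsupp z hz hp2⟩
  -- the value of alphaV on fibers
  have hval : ∀ y, alphaV μ (fiberY fCc y) = g y := by
    intro y
    have hfib0 : ∀ x, 0 ≤ fiberY fCc y x := fun x => hF0 (x, y)
    rw [alphaV_of_nonneg hμ hfib0]
    apply le_antisymm
    · exact pval_le hμ (hg01 y).1 (fun x => min_le_left _ _)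
    · rcases eq_or_lt_of_le (hg01 y).1 with h0 | hpos
      · rw [← h0]; exact pval_nonneg hμ _
      · have hyK : y ∈ tsupport ⇑g := subset_tsupport _ (Function.mem_support.mpr hpos.ne')
        rw [hDcover] at hyK
        simp only [Set.mem_iUnion] at hyK
        obtain ⟨z, hz, hyD⟩ := hyK
        have hσ1 : σ z y = 1 := hσone z hz y hyD
        have hkey : ∀ τ, 0 < τ → τ < g y → τ ≤ pval μ (fiberY fCc y) := by
          intro τ hτ hτg
          apply pval_le_of_mem hμ hτ
          have hCsub : Cfun z ⊆ {x | τ < fiberY fCc y x} := by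
            intro x hx
            have hhx : hfun z x = 1 := hhone z (htK z hz) x hx
            have hterm : (1:ℝ) ≤ ∑ w ∈ t, min (hfun w x) (σ w y) := by
              have heq1 : min (hfun z x) (σ z y) = 1 := by rw [hhx, hσ1, min_self]
              calc (1:ℝ) = min (hfun z x) (σ z y) := heq1.symm
                _ ≤ ∑ w ∈ t, min (hfun w x) (σ w y) :=
                    Finset.single_le_sum
                      (fun w hw => le_min (hh01 w (htK w hw) x).1 (hσ01 w hw y).1) hz
            show τ < min (g y) (∑ w ∈ t, min ((hfun w) x) ((σ w) y))
            rw [min_eq_left ((hg01 y).2.trans hterm)]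
            exact hτg
          have := tm_one_mono_co hμ (hCcpt z (htK z hz)) (isOpen_level _ τ)
            hCsub (hμC z (htK z hz))
          exact this
        by_contra hcon
        push_neg at hcon
        have hpv0 : 0 ≤ pval μ (fiberY fCc y) := pval_nonneg hμ _
        have h1 : 0 < (pval μ (fiberY fCc y) + g y)/2 := by linarith
        have h2 : (pval μ (fiberY fCc y) + g y)/2 < g y := by linarith
        have := hkey _ h1 h2
        linarith
  have hTeq : TCc ρ fCc = c.toReal • g := by
    apply TCc_eqCc hρ hc hc' hμ hdec
    intro y
    show ρ (fiberY fCc y) = (c.toReal • g) y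
    rw [claimA hρ hc hc' hμ hdec (fiberY fCc y), hval y]
    simp only [CompactlySupportedContinuousMap.smul_apply, smul_eq_mul]
  have hηval : prodQI η ρ fCc = c.toReal * η g := by
    show η (TCc ρ fCc) = c.toReal * η g
    rw [hTeq, hη.smul]
  have hle := le_qiOpen (prodQI η ρ) hadm hsuppA
  rw [hηval, ENNReal.ofReal_mul hcR.le, ENNReal.ofReal_toReal hc'] at hle
  exact hle

end Aux9

section Aux10
set_option linter.unusedSectionVars false
set_option maxHeartbeats 1000000

variable {X Y : Type*} [TopologicalSpace X] [T2Space X] [LocallyCompactSpace X]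
  [TopologicalSpace Y] [T2Space Y] [LocallyCompactSpace Y]
variable {ρ : C_c(X, ℝ) → ℝ} {η : C_c(Y, ℝ) → ℝ} {c : ℝ≥0∞} {μ : Set X → ℝ≥0∞}

theorem W_open (hc : 0 < c) (hc' : c ≠ ∞) (hμ : IsSimpleTM μ)
    (hdec : ∀ A : Set X, IsOpen A ∨ IsClosed A → qiMeas ρ A = c * μ A)
    {A : Set (X × Y)} (hA : IsOpen A) :
    IsOpen {y : Y | qiMeas ρ {x | (x, y) ∈ A} = c} := by
  rw [isOpen_iff_forall_mem_open]
  intro y hy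
  have hAy : IsOpen {x | (x, y) ∈ A} := hA.preimage (continuous_id.prodMk continuous_const)
  have hμAy : μ {x | (x, y) ∈ A} = 1 := by
    have hq : qiMeas ρ {x | (x, y) ∈ A} = c := hy
    rw [hdec _ (Or.inl hAy)] at hq
    rcases hμ.2 _ (Or.inl hAy) with h0 | h1
    · rw [h0, mul_zero] at hq; exact absurd hq.symm hc.ne'
    · exact h1
  obtain ⟨C, hCcpt, hCA, hμC⟩ := tm_inner hμ hAy hμAy
  have hCy : C ×ˢ ({y} : Set Y) ⊆ A := by
    rintro ⟨x, y'⟩ ⟨hx, hy'⟩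
    rcases hy' with rfl
    exact hCA hx
  obtain ⟨u, v, hu, hv, hCu, hyv, huv⟩ := generalized_tube_lemma hCcpt isCompact_singleton hA hCy
  refine ⟨v, ?_, hv, hyv rfl⟩
  intro y' hy'
  have hCsub : C ⊆ {x | (x, y') ∈ A} := fun x hx => huv ⟨hCu hx, hy'⟩
  have hAy' : IsOpen {x | (x, y') ∈ A} := hA.preimage (continuous_id.prodMk continuous_const)
  have hone : μ {x | (x, y') ∈ A} = 1 := tm_one_mono_co hμ hCcpt hAy' hCsub hμC
  show qiMeas ρ {x | (x, y') ∈ A} = c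
  rw [hdec _ (Or.inl hAy'), hone, mul_one]

theorem part2 (hρ : IsQuasiIntegral ρ) (hη : IsQuasiIntegral η)
    (hc : 0 < c) (hc' : c ≠ ∞) (hμ : IsSimpleTM μ)
    (hdec : ∀ A : Set X, IsOpen A ∨ IsClosed A → qiMeas ρ A = c * μ A)
    (hνcf : ∀ K : Set Y, IsCompact K → qiMeas η K ≠ ∞)
    {A : Set (X × Y)} (hA : IsOpen A) :
    qiMeas (prodQI η ρ) A = c * qiMeas η {y | qiMeas ρ {x | (x, y) ∈ A} = c} := by
  rw [qiMeas_isOpen _ hA, qiMeas_isOpen η (W_open hc hc' hμ hdec hA)]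
  exact le_antisymm (part2_le hρ hη hc hc' hμ hdec hνcf hA)
    (part2_ge hρ hη hc hc' hμ hdec hA)

theorem ennreal_mul_iInf {ι : Sort*} (hc0 : c ≠ 0) (hc' : c ≠ ∞) (f : ι → ℝ≥0∞) :
    c * ⨅ i, f i = ⨅ i, c * f i :=
  ENNReal.mul_iInf' (fun h => absurd h hc') (fun h => absurd h hc0)

theorem part3 (hρ : IsQuasiIntegral ρ) (hη : IsQuasiIntegral η)
    (hc : 0 < c) (hc' : c ≠ ∞) (hμ : IsSimpleTM μ)
    (hdec : ∀ A : Set X, IsOpen A ∨ IsClosed A → qiMeas ρ A = c * μ A)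
    (hνcf : ∀ K : Set Y, IsCompact K → qiMeas η K ≠ ∞)
    {A : Set (X × Y)} (hAcpt : IsCompact A) :
    qiMeas (prodQI η ρ) A = c * qiMeas η {y | qiMeas ρ {x | (x, y) ∈ A} = c} := by
  by_cases hAopen : IsOpen A
  · exact part2 hρ hη hc hc' hμ hdec hνcf hAopen
  set S := {y | qiMeas ρ {x | (x, y) ∈ A} = c} with hSdef
  have hAycpt : ∀ y : Y, IsCompact {x | (x, y) ∈ A} := by
    intro y
    have h1 : IsCompact (A ∩ Set.univ ×ˢ ({y} : Set Y)) :=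
      hAcpt.inter_right (isClosed_univ.prod isClosed_singleton)
    have h2 : {x | (x, y) ∈ A} = Prod.fst '' (A ∩ Set.univ ×ˢ ({y} : Set Y)) := by
      ext x
      constructor
      · intro hx
        exact ⟨(x, y), ⟨hx, ⟨trivial, rfl⟩⟩, rfl⟩
      · rintro ⟨p, ⟨hp, ⟨-, hp2⟩⟩, rfl⟩
        have hpy : p.2 = y := hp2
        show (p.1, y) ∈ A
        rw [← hpy]
        exact hp
    rw [h2]
    exact h1.image continuous_fst
  have hSchar : ∀ y, y ∈ S ↔ μ {x | (x, y) ∈ A} = 1 := by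
    intro y
    rw [hSdef, Set.mem_setOf_eq, hdec _ (Or.inr (hAycpt y).isClosed)]
    constructor
    · intro h
      rcases hμ.2 _ (Or.inr (hAycpt y).isClosed) with h0 | h1
      · rw [h0, mul_zero] at h; exact absurd h.symm hc.ne'
      · exact h1
    · intro h; rw [h, mul_one]
  rw [qiMeas_eq_iInf, qiMeas_eq_iInf η S]
  have hdist : c * (⨅ (V : Set Y) (_ : IsOpen V ∧ S ⊆ V), qiOpen η V)
      = ⨅ (V : Set Y) (_ : IsOpen V ∧ S ⊆ V), c * qiOpen η V := by
    rw [ennreal_mul_iInf hc.ne' hc']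
    exact iInf_congr fun V => ennreal_mul_iInf hc.ne' hc' _
  rw [hdist]
  apply le_antisymm
  · -- construct a good open superset O of A for every V ⊇ S
    apply le_iInf₂
    intro V hV
    obtain ⟨hVopen, hSV⟩ := hV
    set KV := (Prod.snd '' A) \ V with hKVdef
    have hKVcpt : IsCompact KV := (hAcpt.image continuous_snd).diff hVopen
    have hOdata : ∀ y ∈ KV, ∃ (U : Set X) (Q : Set Y), IsOpen U ∧ μ U = 0 ∧ IsCompact Q ∧
        y ∈ interior Q ∧ ∀ y' ∈ Q, {x | (x, y') ∈ A} ⊆ U := by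
      intro y hyKV
      have hynS : y ∉ S := fun hyS => hyKV.2 (hSV hyS)
      have hμAy : μ {x | (x, y) ∈ A} = 0 := by
        rcases hμ.2 _ (Or.inr (hAycpt y).isClosed) with h0 | h1
        · exact h0
        · exact absurd ((hSchar y).mpr h1) hynS
      obtain ⟨U, hUopen, hAyU, hμU⟩ := tm_outer_zero hμ (hAycpt y).isClosed hμAy
      set Nset := (Prod.snd '' (A ∩ (Uᶜ ×ˢ (Set.univ : Set Y))))ᶜ with hNsetdef
      have hNopen : IsOpen Nset := by
        apply isOpen_compl_iff.mpr
        apply IsCompact.isClosed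
        apply IsCompact.image _ continuous_snd
        exact hAcpt.inter_right ((hUopen.isClosed_compl).prod isClosed_univ)
      have hyN : y ∈ Nset := by
        rw [hNsetdef, Set.mem_compl_iff]
        rintro ⟨p, ⟨hpA, hp1, -⟩, hp2⟩
        apply hp1
        apply hAyU
        show (p.1, y) ∈ A
        have hpy : p.2 = y := hp2
        rw [← hpy]
        exact hpA
      have hNprop : ∀ y' ∈ Nset, {x | (x, y') ∈ A} ⊆ U := by
        intro y' hy' x hx
        by_contra hxU
        exact hy' ⟨(x, y'), ⟨hx, hxU, trivial⟩, rfl⟩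
      obtain ⟨Q, hQcpt, hyQ, hQN⟩ := exists_compact_between isCompact_singleton hNopen
        (Set.singleton_subset_iff.mpr hyN)
      exact ⟨U, Q, hUopen, hμU, hQcpt, hyQ rfl, fun y' hy' => hNprop y' (hQN hy')⟩
    choose! Ufn Qfn hUo hU0 hQc hyQ hQsub using hOdata
    obtain ⟨t, htKV, hcovKV⟩ := hKVcpt.elim_nhds_subcover (fun y => interior (Qfn y))
      (fun y hy => isOpen_interior.mem_nhds (hyQ y hy))
    set O := (Set.univ ×ˢ V) ∪
      ((⋂ z ∈ t, ((Ufn z ×ˢ (Set.univ : Set Y)) ∪ ((Set.univ : Set X) ×ˢ (Qfn z)ᶜ))) ∩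
        ((Set.univ : Set X) ×ˢ (⋃ z ∈ t, interior (Qfn z)))) with hOdef
    have hOopen : IsOpen O := by
      apply IsOpen.union (isOpen_univ.prod hVopen)
      apply IsOpen.inter
      · apply isOpen_biInter_finset
        intro z hz
        exact ((hUo z (htKV z hz)).prod isOpen_univ).union
          (isOpen_univ.prod (hQc z (htKV z hz)).isClosed.isOpen_compl)
      · exact isOpen_univ.prod (isOpen_biUnion (fun z _ => isOpen_interior))
    have hAO : A ⊆ O := by
      rintro ⟨x, y⟩ hxy
      by_cases hyV : y ∈ V
      · exact Or.inl ⟨trivial, hyV⟩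
      · have hyKV : y ∈ KV := ⟨⟨(x, y), hxy, rfl⟩, hyV⟩
        refine Or.inr ⟨?_, trivial, hcovKV hyKV⟩
        apply Set.mem_iInter₂.mpr
        intro z hz
        by_cases hyQz : y ∈ Qfn z
        · exact Or.inl ⟨hQsub z (htKV z hz) y hyQz hxy, trivial⟩
        · exact Or.inr ⟨trivial, hyQz⟩
    have hOyopen : ∀ y : Y, IsOpen {x | (x, y) ∈ O} :=
      fun y => hOopen.preimage (continuous_id.prodMk continuous_const)
    have hWOV : {y | qiMeas ρ {x | (x, y) ∈ O} = c} ⊆ V := by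
      intro y hyW
      by_contra hyV
      have hOy0 : μ {x | (x, y) ∈ O} = 0 := by
        by_cases hyint : y ∈ ⋃ z ∈ t, interior (Qfn z)
        · simp only [Set.mem_iUnion] at hyint
          obtain ⟨z, hz, hyz⟩ := hyint
          have hsub : {x | (x, y) ∈ O} ⊆ Ufn z := by
            intro x hx
            rcases hx with h | ⟨h1, h2⟩
            · exact absurd h.2 hyV
            · have h3 := Set.mem_iInter₂.mp h1 z hz
              rcases h3 with h4 | h5
              · exact h4.1
              · exact absurd (interior_subset hyz) h5.2
          have hle := tm_mono_oo hμ (hOyopen y) (hUo z (htKV z hz)) hsub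
          rw [hU0 z (htKV z hz)] at hle
          exact le_antisymm hle (zero_le)
        · have hsub : {x | (x, y) ∈ O} = (∅ : Set X) := by
            apply Set.eq_empty_iff_forall_notMem.mpr
            intro x hx
            rcases hx with h | ⟨-, h2⟩
            · exact hyV h.2
            · exact hyint h2.2
          rw [hsub]
          exact tm_empty hμ
      have hcontra : qiMeas ρ {x | (x, y) ∈ O} = 0 := by
        rw [hdec _ (Or.inl (hOyopen y)), hOy0, mul_zero]
      have hyW' : qiMeas ρ {x | (x, y) ∈ O} = c := hyW
      rw [hyW'] at hcontra
      exact hc.ne' hcontra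
    calc (⨅ (U : Set (X × Y)) (_ : IsOpen U ∧ A ⊆ U), qiOpen (prodQI η ρ) U)
        ≤ qiOpen (prodQI η ρ) O := iInf₂_le O ⟨hOopen, hAO⟩
      _ = c * qiOpen η {y | qiMeas ρ {x | (x, y) ∈ O} = c} := by
          rw [← qiMeas_isOpen _ hOopen, part2 hρ hη hc hc' hμ hdec hνcf hOopen,
            qiMeas_isOpen η (W_open hc hc' hμ hdec hOopen)]
      _ ≤ c * qiOpen η V := mul_le_mul_right (qiOpen_mono η hWOV) _
  · apply le_iInf₂
    intro O hO
    obtain ⟨hOopen, hAO⟩ := hO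
    have hOyopen : ∀ y : Y, IsOpen {x | (x, y) ∈ O} :=
      fun y => hOopen.preimage (continuous_id.prodMk continuous_const)
    have hSWO : S ⊆ {y | qiMeas ρ {x | (x, y) ∈ O} = c} := by
      intro y hy
      have h1 : μ {x | (x, y) ∈ A} = 1 := (hSchar y).mp hy
      have hsub : {x | (x, y) ∈ A} ⊆ {x | (x, y) ∈ O} := fun x hx => hAO hx
      have h2 : μ {x | (x, y) ∈ O} = 1 := by
        rcases hμ.2 _ (Or.inl (hOyopen y)) with h0 | h1'
        · exfalso
          have := tm_mono_fo hμ (hAycpt y).isClosed (hOyopen y) hsub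
          rw [h1, h0] at this
          exact absurd this (by norm_num)
        · exact h1'
      show qiMeas ρ {x | (x, y) ∈ O} = c
      rw [hdec _ (Or.inl (hOyopen y)), h2, mul_one]
    have hWOopen := W_open hc hc' hμ hdec hOopen
    calc (⨅ (V : Set Y) (_ : IsOpen V ∧ S ⊆ V), c * qiOpen η V)
        ≤ c * qiOpen η {y | qiMeas ρ {x | (x, y) ∈ O} = c} :=
          iInf₂_le _ ⟨hWOopen, hSWO⟩
      _ = qiOpen (prodQI η ρ) O := by
          rw [← qiMeas_isOpen η hWOopen, ← part2 hρ hη hc hc' hμ hdec hνcf hOopen,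
            qiMeas_isOpen _ hOopen]
    
end Aux10
end QLF

namespace QLF
theorem statement15 {X Y : Type*}
    [TopologicalSpace X] [LocallyCompactSpace X] [T2Space X] [ConnectedSpace X]
    [TopologicalSpace Y] [LocallyCompactSpace Y] [T2Space Y] [ConnectedSpace Y]
    (ρ : C_c(X, ℝ) → ℝ) (η : C_c(Y, ℝ) → ℝ)
    (hρ : IsQuasiIntegral ρ) (hη : IsQuasiIntegral η)
    (c : ℝ≥0∞) (μ' : Set X → ℝ≥0∞) (hc : 0 < c) (hc' : c ≠ ∞) (hμ' : IsSimpleTM μ')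
    (hdec : ∀ A : Set X, IsOpen A ∨ IsClosed A → qiMeas ρ A = c * μ' A)
    (hνcf : ∀ K : Set Y, IsCompact K → qiMeas η K ≠ ∞) :
    IsQuasiIntegral (prodQI η ρ) ∧
    (∀ A : Set (X × Y), IsOpen A →
      qiMeas (prodQI η ρ) A = c * qiMeas η {y : Y | qiMeas ρ {x : X | (x, y) ∈ A} = c}) ∧
    (qiMeas η (Set.univ : Set Y) ≠ ∞ →
      ∀ A : Set (X × Y), IsCompact A →
        qiMeas (prodQI η ρ) A = c * qiMeas η {y : Y | qiMeas ρ {x : X | (x, y) ∈ A} = c}) := by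
  refine ⟨prodQI_isQI hρ hη hc hc' hμ' hdec, ?_, ?_⟩
  · intro A hA
    exact part2 hρ hη hc hc' hμ' hdec hνcf hA
  · intro _ A hA
    exact part3 hρ hη hc hc' hμ' hdec hνcf hA
end QLF
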